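/- arXiv:1007.1477 — 9 statements merged into one kernel-verified Lean document; each statement's English description precedes it below -/
import Mathlib

section
/- A bounded operator T : H → J attains its norm on the unit sphere if and only if ‖T‖ is an eigenvalue of the positive square root P_T of T*T. -/
open ContinuousLinearMap RCLike
open scoped InnerProductSpace

private lemma re_real_mul (r : ℝ) (z : ℂ) : re ((r : ℂ) * z) = r * re z := by
  rw [← Complex.real_smul, RCLike.smul_re]

private lemma pos_inner_zero {E : Type*} [NormedAddCommGroup E] [InnerProductSpace ℂ E]
    [CompleteSpace E] (Q : E →L[ℂ] E) (hQ : Q.IsPositive) (x : E)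
    (hx : re ⟪Q x, x⟫_ℂ = 0) : Q x = 0 := by
  set a : ℝ := ‖Q x‖ ^ 2 with ha
  set c : ℝ := re ⟪Q (Q x), Q x⟫_ℂ with hc
  have hc0 : 0 ≤ c := hQ.re_inner_nonneg_left (Q x)
  have ha0 : 0 ≤ a := by positivity
  have hsa : adjoint Q = Q := hQ.isSelfAdjoint
  have hQQx : ⟪Q (Q x), x⟫_ℂ = ⟪Q x, Q x⟫_ℂ := by
    calc ⟪Q (Q x), x⟫_ℂ = ⟪adjoint Q (Q x), x⟫_ℂ := by rw [hsa]
    _ = ⟪Q x, Q x⟫_ℂ := adjoint_inner_left Q x (Q x)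
  have hre : re ⟪Q x, Q x⟫_ℂ = a := inner_self_eq_norm_sq (Q x)
  have key : ∀ t : ℝ, 0 ≤ 2 * t * a + t ^ 2 * c := by
    intro t
    have h := hQ.re_inner_nonneg_left (x + (t : ℂ) • Q x)
    have hexp : ⟪Q (x + (t : ℂ) • Q x), x + (t : ℂ) • Q x⟫_ℂ
        = ⟪Q x, x⟫_ℂ + (t : ℂ) * ⟪Q x, Q x⟫_ℂ + (t : ℂ) * ⟪Q x, Q x⟫_ℂ
          + (t : ℂ) * ((t : ℂ) * ⟪Q (Q x), Q x⟫_ℂ) := by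
      rw [map_add, map_smul]
      simp only [inner_add_left, inner_add_right, inner_smul_left, inner_smul_right,
        Complex.conj_ofReal, hQQx]
      ring
    rw [hexp] at h
    simp only [map_add, re_real_mul, hre, hx] at h
    nlinarith [h]
  have haz : a = 0 := by
    rcases eq_or_lt_of_le hc0 with hc' | hc'
    · have := key (-1); nlinarith
    · by_contra hane
      have hapos : 0 < a := lt_of_le_of_ne ha0 (Ne.symm hane)
      have h1 := key (-(a / c))
      have h2 : 2 * (-(a / c)) * a + (-(a / c)) ^ 2 * c = -(a ^ 2) / c := by
        field_simp; ring
      rw [h2] at h1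
      have : -(a ^ 2) / c < 0 := div_neg_of_neg_of_pos (by nlinarith) hc'
      linarith
  have : ‖Q x‖ = 0 := by nlinarith [norm_nonneg (Q x)]
  simpa using this

theorem attains_norm_iff_sqrt_eigenvalue {H J : Type*}
    [NormedAddCommGroup H] [InnerProductSpace ℂ H] [CompleteSpace H]
    [NormedAddCommGroup J] [InnerProductSpace ℂ J] [CompleteSpace J]
    (T : H →L[ℂ] J) (P : H →L[ℂ] H) (hP : P.IsPositive)
    (hP2 : P ∘L P = (ContinuousLinearMap.adjoint T) ∘L T) :
    (∃ x : H, ‖x‖ = 1 ∧ ‖T x‖ = ‖T‖) ↔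
      (∃ x : H, x ≠ 0 ∧ P x = (‖T‖ : ℂ) • x) := by
  have hcast : ((‖T‖ : ℂ)) ^ 2 = ((‖T‖ ^ 2 : ℝ) : ℂ) := by push_cast; ring
  have hPP : ∀ y : H, re ⟪P (P y), y⟫_ℂ = ‖T y‖ ^ 2 := by
    intro y
    have : P (P y) = adjoint T (T y) := by
      have := congrArg (fun S => S y) hP2
      simpa using this
    rw [this, adjoint_inner_left]
    exact inner_self_eq_norm_sq (T y)
  constructor
  · rintro ⟨x, hx1, hxT⟩
    set Q : H →L[ℂ] H := ((‖T‖ : ℂ) ^ 2) • 1 - P ∘L P with hQdef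
    have hPsa : adjoint P = P := hP.isSelfAdjoint
    have hQpos : Q.IsPositive := by
      constructor
      · have h1 : IsSelfAdjoint (((‖T‖ : ℂ) ^ 2) • (1 : H →L[ℂ] H)) := by
          rw [IsSelfAdjoint, star_smul, star_one]
          congr 1
          simp [Complex.ext_iff]
        have h2 : IsSelfAdjoint (P ∘L P) := by
          rw [isSelfAdjoint_iff'] at *
          rw [adjoint_comp, hPsa]
        exact (h1.sub h2).isSymmetric
      · intro y
        rw [ContinuousLinearMap.reApplyInnerSelf_apply]
        rw [hQdef]
        simp only [sub_apply, smul_apply, one_apply, one_apply_eq_self, comp_apply, inner_sub_left,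
          inner_smul_left, map_sub]
        have h1 : re ((starRingEnd ℂ) ((‖T‖ : ℂ) ^ 2) * ⟪y, y⟫_ℂ) = ‖T‖ ^ 2 * ‖y‖ ^ 2 := by
          have hs : (starRingEnd ℂ) ((‖T‖ : ℂ) ^ 2) = ((‖T‖ ^ 2 : ℝ) : ℂ) := by
            simp [Complex.ext_iff]
          rw [hs, re_real_mul, inner_self_eq_norm_sq]
        rw [h1, hPP y]
        have := T.le_opNorm y
        nlinarith [norm_nonneg (T y), norm_nonneg T, norm_nonneg y]
    have hQx : Q x = 0 := by
      apply pos_inner_zero Q hQpos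
      rw [hQdef]
      simp only [sub_apply, smul_apply, one_apply, one_apply_eq_self, comp_apply, inner_sub_left,
        inner_smul_left, map_sub]
      have h1 : re ((starRingEnd ℂ) ((‖T‖ : ℂ) ^ 2) * ⟪x, x⟫_ℂ) = ‖T‖ ^ 2 * ‖x‖ ^ 2 := by
        have hs : (starRingEnd ℂ) ((‖T‖ : ℂ) ^ 2) = ((‖T‖ ^ 2 : ℝ) : ℂ) := by
          simp [Complex.ext_iff]
        rw [hs, re_real_mul, inner_self_eq_norm_sq]
      rw [h1, hPP x, hx1, hxT]
      ring
    have hP2x : P (P x) = ((‖T‖ : ℂ) ^ 2) • x := by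
      have h0 : ((‖T‖ : ℂ) ^ 2) • x - P (P x) = 0 := by
        have := hQx
        rw [hQdef] at this
        simpa using this
      exact (sub_eq_zero.mp h0).symm
    by_cases hT0 : ‖T‖ = 0
    · refine ⟨x, fun h => by simp [h] at hx1, ?_⟩
      have hPx0 : P x = 0 := by
        have h1 : re ⟪P x, P x⟫_ℂ = 0 := by
          have he : ⟪P x, P x⟫_ℂ = ⟪P (P x), x⟫_ℂ := by
            calc ⟪P x, P x⟫_ℂ = ⟪adjoint P (P x), x⟫_ℂ := (adjoint_inner_left P x (P x)).symm
            _ = ⟪P (P x), x⟫_ℂ := by rw [hPsa]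
          rw [he, hP2x]
          simp [hT0]
        have h2 := inner_self_eq_norm_sq (𝕜 := ℂ) (P x)
        rw [h1] at h2
        have : ‖P x‖ = 0 := by nlinarith [norm_nonneg (P x)]
        simpa using this
      rw [hPx0, hT0]
      simp
    · have hTpos : 0 < ‖T‖ := lt_of_le_of_ne (norm_nonneg T) (Ne.symm hT0)
      set y : H := P x - (‖T‖ : ℂ) • x with hy
      by_cases hy0 : y = 0
      · refine ⟨x, fun h => by simp [h] at hx1, ?_⟩
        exact sub_eq_zero.mp hy0
      · exfalso
        have hPy : P y = -(‖T‖ : ℂ) • y := by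
          rw [hy, map_sub, map_smul, hP2x]
          module
        have hnn := hP.re_inner_nonneg_left y
        rw [hPy] at hnn
        have he : ⟪-(‖T‖ : ℂ) • y, y⟫_ℂ = ((-‖T‖ : ℝ) : ℂ) * ⟪y, y⟫_ℂ := by
          rw [inner_smul_left]
          congr 1
          simp [Complex.ext_iff]
        rw [he, re_real_mul, inner_self_eq_norm_sq] at hnn
        have hyn : 0 < ‖y‖ := norm_pos_iff.mpr hy0
        nlinarith [mul_pos hTpos (pow_pos hyn 2)]
  · rintro ⟨x, hx0, hPx⟩
    have hxn : 0 < ‖x‖ := norm_pos_iff.mpr hx0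
    set u : H := (((‖x‖⁻¹ : ℝ) : ℂ)) • x with hu
    have hun : ‖u‖ = 1 := by
      rw [hu, norm_smul]
      simp [abs_of_pos hxn, inv_mul_cancel₀ (ne_of_gt hxn)]
    refine ⟨u, ?_, ?_⟩
    · exact hun
    · have hPu : P u = (‖T‖ : ℂ) • u := by
        rw [hu, map_smul, hPx, smul_comm]
      have h1 : ‖T u‖ ^ 2 = ‖T‖ ^ 2 := by
        rw [← hPP u]
        have hPPu : P (P u) = ((‖T‖ ^ 2 : ℝ) : ℂ) • u := by
          rw [hPu, map_smul, hPu, smul_smul]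
          congr 1
          push_cast
          ring
        rw [hPPu, inner_smul_left, Complex.conj_ofReal, re_real_mul, inner_self_eq_norm_sq, hun]
        norm_num
      have h2 : ‖T u‖ = ‖T‖ := by
        nlinarith [norm_nonneg (T u), norm_nonneg T]
      exact h2
end

section
/- If T : H → J is a bounded operator and x₀ is a unit vector with ‖T x₀‖ = ‖T‖, then T maps the orthogonal complement of x₀ into the orthogonal complement of T x₀; that is, for every y with ⟨y, x₀⟩ = 0 one has ⟨T y, T x₀⟩ = 0. -/
open scoped InnerProductSpace ComplexConjugate

theorem attains_norm_maps_orthogonal {H J : Type*}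
    [NormedAddCommGroup H] [InnerProductSpace ℂ H] [CompleteSpace H]
    [NormedAddCommGroup J] [InnerProductSpace ℂ J] [CompleteSpace J]
    (T : H →L[ℂ] J) (x₀ : H) (hx₀ : ‖x₀‖ = 1) (hT : ‖T x₀‖ = ‖T‖) :
    ∀ y : H, (inner ℂ y x₀ : ℂ) = 0 → (inner ℂ (T y) (T x₀) : ℂ) = 0 := by
  intro y hy
  by_contra hc
  set c : ℂ := inner ℂ (T y) (T x₀) with hc_def
  have hcpos : 0 < ‖c‖ := norm_pos_iff.mpr hc
  have key : ∀ ε : ℝ, 0 < ε → 2 ≤ ε * (‖T‖ ^ 2 * ‖y‖ ^ 2) := by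
    intro ε hε
    set t : ℂ := (ε : ℂ) * c with ht_def
    have htnorm : ‖t‖ ^ 2 = ε ^ 2 * ‖c‖ ^ 2 := by
      rw [ht_def, norm_mul, Complex.norm_real, Real.norm_eq_abs, abs_of_pos hε]; ring
    -- norm of x₀ + t • y
    have h1 : ‖x₀ + t • y‖ ^ 2 = 1 + ε ^ 2 * ‖c‖ ^ 2 * ‖y‖ ^ 2 := by
      have hin : (inner ℂ x₀ (t • y) : ℂ) = 0 := by
        rw [inner_smul_right, ← inner_conj_symm, hy, map_zero, mul_zero]
      rw [@norm_add_sq ℂ, hin, norm_smul, hx₀]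
      simp only [Complex.re_ofNat, map_zero, mul_zero, add_zero]
      rw [mul_pow, htnorm]
      ring
    -- norm of T (x₀ + t • y)
    have h2 : ‖T (x₀ + t • y)‖ ^ 2
        = ‖T‖ ^ 2 + 2 * (ε * ‖c‖ ^ 2) + ε ^ 2 * ‖c‖ ^ 2 * ‖T y‖ ^ 2 := by
      have hmap : T (x₀ + t • y) = T x₀ + t • T y := by
        rw [map_add, map_smul]
      have hin2 : (inner ℂ (T x₀) (t • T y) : ℂ) = (↑ε * ‖c‖ ^ 2 : ℝ) := by
        rw [inner_smul_right, ← inner_conj_symm, ← hc_def, ht_def, mul_assoc,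
          Complex.mul_conj]
        push_cast [Complex.normSq_eq_norm_sq]
        ring
      rw [hmap, @norm_add_sq ℂ, hin2, hT]
      rw [norm_smul, mul_pow, htnorm]
      simp [RCLike.re_to_complex]
      left
      rw [← Complex.ofReal_pow, Complex.ofReal_re]
    have h3 : ‖T (x₀ + t • y)‖ ≤ ‖T‖ * ‖x₀ + t • y‖ := T.le_opNorm _
    have h4 : ‖T (x₀ + t • y)‖ ^ 2 ≤ ‖T‖ ^ 2 * ‖x₀ + t • y‖ ^ 2 := by
      have := mul_self_le_mul_self (norm_nonneg _) h3
      nlinarith [norm_nonneg (T (x₀ + t • y)), norm_nonneg (x₀ + t • y)]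
    rw [h1, h2] at h4
    have hTy : (0:ℝ) ≤ ‖T y‖ ^ 2 := sq_nonneg _
    -- 2 ε ‖c‖² ≤ ε² ‖c‖² ‖T‖² ‖y‖²
    have h5 : 2 * (ε * ‖c‖ ^ 2) ≤ ε ^ 2 * ‖c‖ ^ 2 * (‖T‖ ^ 2 * ‖y‖ ^ 2) := by
      nlinarith
    have hden : 0 < ε * ‖c‖ ^ 2 := by positivity
    nlinarith
  have := key (1 / (‖T‖ ^ 2 * ‖y‖ ^ 2 + 1)) (by positivity)
  have hnn : (0:ℝ) ≤ ‖T‖ ^ 2 * ‖y‖ ^ 2 := by positivity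
  rw [div_mul_eq_mul_div] at this
  have := (le_div_iff₀ (by positivity)).mp this
  nlinarith
end

section
/- If R is an isometry on H and T ∈ L(H) is an operator such that the restriction of T to every nonzero closed subspace attains its norm (T is an AN operator), then both T∘R and R∘T are AN operators. -/
def IsAN {H J : Type*} [NormedAddCommGroup H] [InnerProductSpace ℂ H]
    [NormedAddCommGroup J] [InnerProductSpace ℂ J] (T : H →L[ℂ] J) : Prop :=
  ∀ M : Submodule ℂ H, IsClosed (M : Set H) → M ≠ ⊥ →
    ∃ x ∈ M, ‖x‖ = 1 ∧ ‖T x‖ = ‖T.comp M.subtypeL‖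

theorem isometry_comp_AN {H : Type*}
    [NormedAddCommGroup H] [InnerProductSpace ℂ H] [CompleteSpace H]
    (R T : H →L[ℂ] H) (hR : ∀ x : H, ‖R x‖ = ‖x‖) (hT : IsAN T) :
    IsAN (T ∘L R) ∧ IsAN (R ∘L T) := by
  have hRiso : Isometry R := AddMonoidHomClass.isometry_of_norm R hR
  constructor
  · intro M hMc hMne
    set N : Submodule ℂ H := M.map (R : H →ₗ[ℂ] H) with hNdef
    have hNset : (N : Set H) = R '' (M : Set H) := rfl
    have hNc : IsClosed (N : Set H) := by
      rw [hNset]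
      exact ((hRiso.isUniformInducing.isComplete_iff).2 hMc.isComplete).isClosed
    have hNne : N ≠ ⊥ := by
      obtain ⟨x, hxM, hx0⟩ := Submodule.exists_mem_ne_zero_of_ne_bot hMne
      refine (Submodule.ne_bot_iff N).2 ?_
      refine ⟨R x, ⟨x, hxM, rfl⟩, ?_⟩
      intro h
      apply hx0
      have := hR x
      rw [h, norm_zero] at this
      exact (norm_eq_zero.1 this.symm)
    have key : ‖(T ∘L R).comp M.subtypeL‖ = ‖T.comp N.subtypeL‖ := by
      apply le_antisymm
      · refine ContinuousLinearMap.opNorm_le_bound _ (norm_nonneg (T.comp N.subtypeL)) ?_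
        intro x
        have hx : R (x : H) ∈ N := ⟨x, x.2, rfl⟩
        have : ‖((T ∘L R).comp M.subtypeL) x‖ = ‖(T.comp N.subtypeL) ⟨R x, hx⟩‖ := rfl
        rw [this]
        calc ‖(T.comp N.subtypeL) ⟨R (x : H), hx⟩‖
            ≤ ‖T.comp N.subtypeL‖ * ‖(⟨R (x : H), hx⟩ : N)‖ :=
              (T.comp N.subtypeL).le_opNorm _
          _ = ‖T.comp N.subtypeL‖ * ‖x‖ := by
              congr 1
              show ‖R (x : H)‖ = ‖x‖
              exact hR _
      · refine ContinuousLinearMap.opNorm_le_bound _ (norm_nonneg ((T ∘L R).comp M.subtypeL)) ?_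
        rintro ⟨y, hy⟩
        obtain ⟨x, hxM, rfl⟩ := hy
        show ‖((T ∘L R).comp M.subtypeL) ⟨x, hxM⟩‖ ≤ _
        calc ‖((T ∘L R).comp M.subtypeL) ⟨x, hxM⟩‖
            ≤ ‖(T ∘L R).comp M.subtypeL‖ * ‖(⟨x, hxM⟩ : M)‖ :=
              ((T ∘L R).comp M.subtypeL).le_opNorm _
          _ = ‖(T ∘L R).comp M.subtypeL‖ * ‖(⟨R x, ⟨x, hxM, rfl⟩⟩ : N)‖ := by
              congr 1
              show ‖x‖ = ‖R x‖
              exact (hR x).symm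
    obtain ⟨y, hyN, hy1, hyn⟩ := hT N hNc hNne
    obtain ⟨x, hxM, rfl⟩ := hyN
    refine ⟨x, hxM, ?_, ?_⟩
    · rw [← hR x]; exact hy1
    · exact hyn.trans key.symm
  · intro M hMc hMne
    obtain ⟨x, hxM, hx1, hxn⟩ := hT M hMc hMne
    have key : ‖(R ∘L T).comp M.subtypeL‖ = ‖T.comp M.subtypeL‖ := by
      apply le_antisymm
      · refine ContinuousLinearMap.opNorm_le_bound _ (norm_nonneg (T.comp M.subtypeL)) ?_
        intro z
        show ‖R (T z)‖ ≤ _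
        rw [hR]
        exact (T.comp M.subtypeL).le_opNorm z
      · refine ContinuousLinearMap.opNorm_le_bound _ (norm_nonneg ((R ∘L T).comp M.subtypeL)) ?_
        intro z
        show ‖T (z : H)‖ ≤ _
        rw [← hR (T (z : H))]
        exact ((R ∘L T).comp M.subtypeL).le_opNorm z
    refine ⟨x, hxM, hx1, ?_⟩
    show ‖R (T x)‖ = _
    rw [hR, hxn, key]
end

section
/- If T and S are unitarily equivalent bounded operators (S = U* T U for a unitary U), then T is an AN operator if and only if S is an AN operator. -/
lemma isAN_of_equiv {H J : Type*}
    [NormedAddCommGroup H] [InnerProductSpace ℂ H]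
    [NormedAddCommGroup J] [InnerProductSpace ℂ J]
    (U : J ≃ₗᵢ[ℂ] H) (T : H →L[ℂ] H) (S : J →L[ℂ] J)
    (hS : ∀ x : J, S x = U.symm (T (U x))) (hT : IsAN T) : IsAN S := by
  intro N hNc hNb
  set M : Submodule ℂ H := N.map (U.toLinearMap) with hM
  have hMcoe : (M : Set H) = U '' (N : Set J) := by
    simp only [hM, Submodule.map_coe]; rfl
  have hMc : IsClosed (M : Set H) := by
    rw [hMcoe]
    exact (U.toHomeomorph.isClosedMap) _ hNc
  have hMb : M ≠ ⊥ := by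
    obtain ⟨y, hy, hy0⟩ := Submodule.ne_bot_iff N |>.mp hNb
    refine Submodule.ne_bot_iff M |>.mpr ⟨U y, Submodule.mem_map_of_mem hy, ?_⟩
    simpa using hy0
  have hmemM : ∀ y : J, y ∈ N → U y ∈ M := fun y hy => Submodule.mem_map_of_mem hy
  have hnorm : ‖S.comp N.subtypeL‖ = ‖T.comp M.subtypeL‖ := by
    apply le_antisymm
    · refine ContinuousLinearMap.opNorm_le_bound _ (ContinuousLinearMap.opNorm_nonneg _) fun y => ?_
      have : (S.comp N.subtypeL) y = S (y : J) := rfl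
      rw [this, hS]
      have hUy : (U y : H) ∈ M := hmemM y y.2
      calc ‖U.symm (T (U (y : J)))‖ = ‖(T.comp M.subtypeL) ⟨U y, hUy⟩‖ := by
            simp [ContinuousLinearMap.comp_apply]
        _ ≤ ‖T.comp M.subtypeL‖ * ‖(⟨U y, hUy⟩ : M)‖ :=
            (T.comp M.subtypeL).le_opNorm _
        _ = ‖T.comp M.subtypeL‖ * ‖y‖ := by
            congr 1
            show ‖(U (y : J) : H)‖ = ‖y‖
            simp
    · refine ContinuousLinearMap.opNorm_le_bound _ (ContinuousLinearMap.opNorm_nonneg _) fun x => ?_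
      obtain ⟨y, hy, hyx⟩ := Submodule.mem_map.mp x.2
      have : (T.comp M.subtypeL) x = T (x : H) := rfl
      rw [this]
      have hTx : ‖T (x : H)‖ = ‖S y‖ := by
        rw [hS]
        have : U y = (x : H) := hyx
        rw [this]
        simp
      calc ‖T (x : H)‖ = ‖(S.comp N.subtypeL) ⟨y, hy⟩‖ := by
            rw [hTx]; rfl
        _ ≤ ‖S.comp N.subtypeL‖ * ‖(⟨y, hy⟩ : N)‖ :=
            (S.comp N.subtypeL).le_opNorm _
        _ = ‖S.comp N.subtypeL‖ * ‖x‖ := by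
            congr 1
            show ‖y‖ = ‖(x : H)‖
            rw [← hyx]; simp
  obtain ⟨x, hxM, hx1, hxnorm⟩ := hT M hMc hMb
  refine ⟨U.symm x, ?_, by simpa using hx1, ?_⟩
  · obtain ⟨y, hy, hyx⟩ := Submodule.mem_map.mp hxM
    have : U.symm x = y := by rw [← hyx]; simp
    rw [this]; exact hy
  · rw [hS]
    simpa using hxnorm.trans hnorm.symm

theorem unitary_equiv_AN_iff {H J : Type*}
    [NormedAddCommGroup H] [InnerProductSpace ℂ H] [CompleteSpace H]
    [NormedAddCommGroup J] [InnerProductSpace ℂ J] [CompleteSpace J]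
    (U : J ≃ₗᵢ[ℂ] H) (T : H →L[ℂ] H) (S : J →L[ℂ] J)
    (hS : ∀ x : J, S x = U.symm (T (U x))) :
    IsAN T ↔ IsAN S := by
  constructor
  · exact isAN_of_equiv U T S hS
  · refine isAN_of_equiv U.symm S T (fun x => ?_)
    have := hS (U.symm x)
    simp only [LinearIsometryEquiv.apply_symm_apply] at this
    rw [LinearIsometryEquiv.symm_symm, this]
    simp
end

section
/- A bounded operator T : H → J is an AN operator if and only if for every orthogonal projection Q on H the composition T∘Q attains its norm on the unit sphere. -/
open ContinuousLinearMap
open scoped InnerProductSpace ComplexInnerProductSpace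

section aux

variable {H J : Type*}
    [NormedAddCommGroup H] [InnerProductSpace ℂ H] [CompleteSpace H]
    [NormedAddCommGroup J] [InnerProductSpace ℂ J] [CompleteSpace J]

lemma contract_of_sa_idem (Q : H →L[ℂ] H) (hsa : IsSelfAdjoint Q)
    (hid : Q ∘L Q = Q) (x : H) : ‖Q x‖ ≤ ‖x‖ := by
  by_cases h : Q x = 0
  · simp [h]
  have hq : Q (Q x) = Q x := by
    have := congrArg (fun S => S x) hid
    simpa using this
  have h1 : ⟪Q x, Q x⟫_ℂ = ⟪Q x, x⟫_ℂ := by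
    have hs := hsa.isSymmetric (Q x) x
    simpa [hq] using hs.symm
  have h2 : (‖Q x‖ : ℝ) ^ 2 = RCLike.re ⟪Q x, Q x⟫_ℂ := by
    rw [inner_self_eq_norm_sq]
  have h3 : RCLike.re ⟪Q x, x⟫_ℂ ≤ ‖Q x‖ * ‖x‖ := re_inner_le_norm _ _
  have h4 : (0:ℝ) < ‖Q x‖ := norm_pos_iff.mpr h
  nlinarith [h2, h1 ▸ h2, h3]

lemma norm_comp_eq (T : H →L[ℂ] J) (Q : H →L[ℂ] H) (M : Submodule ℂ H)
    (h1 : ∀ x, Q x ∈ M) (h2 : ∀ x ∈ M, Q x = x) (hc : ∀ x, ‖Q x‖ ≤ ‖x‖) :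
    ‖T ∘L Q‖ = ‖T.comp M.subtypeL‖ := by
  refine le_antisymm ?_ ?_
  · refine opNorm_le_bound _ (opNorm_nonneg _) fun x => ?_
    have : ‖(T ∘L Q) x‖ = ‖(T.comp M.subtypeL) ⟨Q x, h1 x⟩‖ := rfl
    rw [this]
    calc ‖(T.comp M.subtypeL) ⟨Q x, h1 x⟩‖
        ≤ ‖T.comp M.subtypeL‖ * ‖(⟨Q x, h1 x⟩ : M)‖ := le_opNorm _ _
      _ ≤ ‖T.comp M.subtypeL‖ * ‖x‖ := by
          exact mul_le_mul_of_nonneg_left (hc x) (opNorm_nonneg _)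
  · refine opNorm_le_bound _ (opNorm_nonneg _) fun m => ?_
    have : (T.comp M.subtypeL) m = (T ∘L Q) (m : H) := by
      simp [h2 m m.2]
    rw [this]
    calc ‖(T ∘L Q) (m : H)‖ ≤ ‖T ∘L Q‖ * ‖(m : H)‖ := le_opNorm _ _
      _ = ‖T ∘L Q‖ * ‖m‖ := by rw [Submodule.norm_coe]

end aux

theorem AN_iff_comp_projection_attains {H J : Type*}
    [NormedAddCommGroup H] [InnerProductSpace ℂ H] [CompleteSpace H] [Nontrivial H]
    [NormedAddCommGroup J] [InnerProductSpace ℂ J] [CompleteSpace J]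
    (T : H →L[ℂ] J) :
    IsAN T ↔ ∀ Q : H →L[ℂ] H, IsSelfAdjoint Q → Q ∘L Q = Q →
      ∃ x : H, ‖x‖ = 1 ∧ ‖T (Q x)‖ = ‖T ∘L Q‖ := by
  constructor
  · intro hAN Q hsa hid
    by_cases hQ : Q = 0
    · obtain ⟨x, hx⟩ := exists_ne (0 : H)
      refine ⟨(‖x‖⁻¹ : ℂ) • x, ?_, ?_⟩
      · rw [norm_smul]
        simp [norm_pos_iff.mpr hx, ne_eq, hx]
      · subst hQ; simp
    · set M : Submodule ℂ H := LinearMap.range (Q : H →ₗ[ℂ] H) with hM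
      have hfix : ∀ x, x ∈ M ↔ Q x = x := by
        intro x
        constructor
        · rintro ⟨y, rfl⟩
          have := congrArg (fun S => S y) hid
          simpa using this
        · intro h
          exact ⟨x, h⟩
      have hmem : ∀ x, Q x ∈ M := fun x => ⟨x, rfl⟩
      have hclosed : IsClosed (M : Set H) := by
        have : (M : Set H) = (Q - ContinuousLinearMap.id ℂ H) ⁻¹' {0} := by
          ext x
          simp only [Set.mem_preimage, Set.mem_singleton_iff, SetLike.mem_coe, hfix x,
            ContinuousLinearMap.sub_apply, ContinuousLinearMap.id_apply, sub_eq_zero]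
        rw [this]
        exact isClosed_singleton.preimage (Q - ContinuousLinearMap.id ℂ H).continuous
      have hbot : M ≠ ⊥ := by
        intro h
        apply hQ
        ext x
        have : Q x ∈ M := hmem x
        rw [h] at this
        simpa using this
      obtain ⟨x, hxM, hx1, hx2⟩ := hAN M hclosed hbot
      refine ⟨x, hx1, ?_⟩
      rw [(hfix x).mp hxM, hx2]
      exact (norm_comp_eq T Q M hmem (fun y hy => (hfix y).mp hy) (contract_of_sa_idem Q hsa hid)).symm
  · intro h M hclosed hbot
    haveI : CompleteSpace M := hclosed.completeSpace_coe
    set Q : H →L[ℂ] H := M.subtypeL ∘L M.orthogonalProjectionOnto with hQdef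
    have hsa : IsSelfAdjoint Q := isSelfAdjoint_starProjection M
    have h2 : ∀ x ∈ M, Q x = x := by
      intro x hx
      exact Submodule.starProjection_eq_self_iff.mpr hx
    have hid : Q ∘L Q = Q := by
      ext x
      exact h2 _ (by simp [hQdef])
    have hmem : ∀ x, Q x ∈ M := fun x => by simp [hQdef]
    have hc := contract_of_sa_idem Q hsa hid
    have hnorm : ‖T ∘L Q‖ = ‖T.comp M.subtypeL‖ := norm_comp_eq T Q M hmem h2 hc
    obtain ⟨x, hx1, hx2⟩ := h Q hsa hid
    by_cases hz : ‖T.comp M.subtypeL‖ = 0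
    · obtain ⟨m, hmM, hm⟩ := Submodule.exists_mem_ne_zero_of_ne_bot hbot
      have hTz : T.comp M.subtypeL = 0 := (opNorm_zero_iff _).mp hz
      refine ⟨(‖m‖⁻¹ : ℂ) • m, M.smul_mem _ hmM, ?_, ?_⟩
      · rw [norm_smul]; simp [norm_pos_iff.mpr hm, ne_eq, hm]
      · rw [hz]
        have : T ((‖m‖⁻¹ : ℂ) • m) = (T.comp M.subtypeL) ⟨(‖m‖⁻¹ : ℂ) • m, M.smul_mem _ hmM⟩ := rfl
        rw [this, hTz]
        simp
    · have hpos : 0 < ‖T.comp M.subtypeL‖ :=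
        lt_of_le_of_ne (opNorm_nonneg _) (Ne.symm hz)
      have hQx : Q x ≠ 0 := by
        intro hq
        rw [hq] at hx2
        simp only [map_zero, norm_zero] at hx2
        rw [hnorm] at hx2
        exact hz hx2.symm
      have hQxpos : (0:ℝ) < ‖Q x‖ := norm_pos_iff.mpr hQx
      have hQxle : ‖Q x‖ ≤ 1 := by
        calc ‖Q x‖ ≤ ‖x‖ := hc x
          _ = 1 := hx1
      refine ⟨(‖Q x‖⁻¹ : ℂ) • Q x, M.smul_mem _ (hmem x), ?_, ?_⟩
      · rw [norm_smul]; simp [hQxpos.ne', ne_eq, hQx]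
      · have key : ‖T ((‖Q x‖⁻¹ : ℂ) • Q x)‖ = ‖Q x‖⁻¹ * ‖T (Q x)‖ := by
          rw [map_smul, norm_smul]
          simp
        rw [key, hx2, hnorm]
        have hle : ‖T.comp M.subtypeL‖ ≤ ‖Q x‖⁻¹ * ‖T.comp M.subtypeL‖ := by
          nlinarith [inv_anti₀ hQxpos hQxle, (one_le_inv₀ hQxpos).2 hQxle]
        have hge : ‖Q x‖⁻¹ * ‖T.comp M.subtypeL‖ ≤ ‖T.comp M.subtypeL‖ := by
          have hy1 : ‖(‖Q x‖⁻¹ : ℂ) • Q x‖ = 1 := by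
            rw [norm_smul]; simp [hQxpos.ne', ne_eq, hQx]
          have : ‖T ((‖Q x‖⁻¹ : ℂ) • Q x)‖ ≤ ‖T.comp M.subtypeL‖ := by
            have := le_opNorm (T.comp M.subtypeL)
              ⟨(‖Q x‖⁻¹ : ℂ) • Q x, M.smul_mem _ (hmem x)⟩
            simpa [hy1] using this
          rw [key, hx2, hnorm] at this
          exact this
        linarith
end

section
/- If R ∈ L(H) is a finite rank operator, then I + R is an AN operator: for every nonzero closed subspace M of H, the restriction (I+R)|_M attains its norm on the unit sphere of M. -/
open Submodule ContinuousLinearMap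
open scoped InnerProductSpace ComplexConjugate

noncomputable section AuxAN

variable {H : Type*} [NormedAddCommGroup H] [InnerProductSpace ℂ H] [CompleteSpace H]

/-- The adjoint of a finite rank operator has finite rank. -/
lemma AuxAN.adjoint_finiteRank (R : H →L[ℂ] H)
    (hR : FiniteDimensional ℂ (LinearMap.range (R : H →ₗ[ℂ] H))) :
    FiniteDimensional ℂ (LinearMap.range ((ContinuousLinearMap.adjoint R : H →L[ℂ] H) : H →ₗ[ℂ] H)) := by
  haveI : CompleteSpace (LinearMap.range (R : H →ₗ[ℂ] H)) := FiniteDimensional.complete ℂ _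
  have hle : LinearMap.range ((ContinuousLinearMap.adjoint R : H →L[ℂ] H) : H →ₗ[ℂ] H) ≤
      (LinearMap.range (R : H →ₗ[ℂ] H)).map (ContinuousLinearMap.adjoint R).toLinearMap := by
    rintro - ⟨y, rfl⟩
    set K := LinearMap.range (R : H →ₗ[ℂ] H)
    have hdecomp : (ContinuousLinearMap.adjoint R) y =
        (ContinuousLinearMap.adjoint R) (orthogonalProjection K y) := by
      have hmem : y - orthogonalProjection K y ∈ Kᗮ :=
        Submodule.sub_starProjection_mem_orthogonal (K := K) y
      have hz : (ContinuousLinearMap.adjoint R) (y - orthogonalProjection K y) = 0 := by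
        have h0 : ⟪((ContinuousLinearMap.adjoint R) (y - orthogonalProjection K y) : H),
            (ContinuousLinearMap.adjoint R) (y - orthogonalProjection K y)⟫_ℂ = 0 := by
          rw [ContinuousLinearMap.adjoint_inner_left]
          exact (Submodule.mem_orthogonal' K _).mp hmem _ (LinearMap.mem_range_self _ _)
        exact inner_self_eq_zero.mp h0
      have := map_sub (ContinuousLinearMap.adjoint R) y (orthogonalProjection K y)
      rw [hz] at this
      linear_combination (norm := module) -this
    rw [ContinuousLinearMap.coe_coe, hdecomp]
    exact Submodule.mem_map_of_mem (orthogonalProjection K y).2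
  exact Submodule.finiteDimensional_of_le hle


lemma AuxAN.norm_inv_smul {E : Type*} [NormedAddCommGroup E] [NormedSpace ℂ E]
    (m : E) (hm : m ≠ 0) : ‖(‖m‖⁻¹ : ℂ) • m‖ = 1 := by
  rw [norm_smul, norm_inv, Complex.norm_real, Real.norm_eq_abs, abs_norm]
  exact inv_mul_cancel₀ (norm_ne_zero_iff.mpr hm)

/-- If a unit vector of `M` maximizes `‖T ·‖` over the unit sphere of `M`, then the norm of
`T` restricted to `M` is attained there. -/
lemma AuxAN.norm_eq_of_max (T : H →L[ℂ] H) (M : Submodule ℂ H) (x₀ : M) (hx₀ : ‖x₀‖ = 1)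
    (hmax : ∀ m : M, ‖m‖ = 1 → ‖T m‖ ≤ ‖T x₀‖) :
    ‖T x₀‖ = ‖T.comp M.subtypeL‖ := by
  refine le_antisymm ?_ ?_
  · have h := (T.comp M.subtypeL).le_opNorm x₀
    simpa [hx₀] using h
  · refine ContinuousLinearMap.opNorm_le_bound _ (norm_nonneg _) ?_
    intro m
    by_cases hm : m = 0
    · simp [hm]
    · have hm0 : ‖m‖ ≠ 0 := norm_ne_zero_iff.mpr hm
      have h1 : ‖(‖m‖⁻¹ : ℂ) • m‖ = 1 := AuxAN.norm_inv_smul m hm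
      have h2 := hmax ((‖m‖⁻¹ : ℂ) • m) h1
      have h3 : ‖T ↑((‖m‖⁻¹ : ℂ) • m)‖ = ‖m‖⁻¹ * ‖T ↑m‖ := by
        rw [Submodule.coe_smul, map_smul, norm_smul]
        simp
      rw [h3] at h2
      have h4 : ‖T ↑m‖ ≤ ‖T ↑x₀‖ * ‖m‖ := by
        rw [mul_comm]
        rwa [inv_mul_le_iff₀ (by positivity)] at h2
      simpa using h4

/-- Norm attainment on a finite-dimensional nonzero subspace. -/
lemma AuxAN.fin_dim_case (T : H →L[ℂ] H) (M : Submodule ℂ H)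
    [FiniteDimensional ℂ M] (hMne : M ≠ ⊥) :
    ∃ x ∈ M, ‖x‖ = 1 ∧ ‖T x‖ = ‖T.comp M.subtypeL‖ := by
  have hnt : Nontrivial M := Submodule.nontrivial_iff_ne_bot.mpr hMne
  obtain ⟨m, hm⟩ := exists_ne (0 : M)
  have hm0 : ‖m‖ ≠ 0 := norm_ne_zero_iff.mpr hm
  have hsph : ((‖m‖⁻¹ : ℂ) • m) ∈ Metric.sphere (0 : M) 1 := by
    simpa using AuxAN.norm_inv_smul m hm
  have hcpt : IsCompact (Metric.sphere (0 : M) 1) := isCompact_sphere _ _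
  have hcont : ContinuousOn (fun m : M => ‖T ↑m‖) (Metric.sphere (0 : M) 1) := by
    fun_prop
  obtain ⟨x₀, hx₀mem, hx₀max⟩ := hcpt.exists_isMaxOn ⟨_, hsph⟩ hcont
  have hx₀ : ‖x₀‖ = 1 := by simpa using hx₀mem
  refine ⟨↑x₀, x₀.2, hx₀, AuxAN.norm_eq_of_max T M x₀ hx₀ ?_⟩
  intro m hm1
  exact hx₀max (by simpa using hm1)

end AuxAN

set_option maxHeartbeats 1000000 in
theorem id_add_finiteRank_AN {H : Type*}
    [NormedAddCommGroup H] [InnerProductSpace ℂ H] [CompleteSpace H]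
    (R : H →L[ℂ] H) (hR : FiniteDimensional ℂ (LinearMap.range (R : H →ₗ[ℂ] H))) :
    IsAN (ContinuousLinearMap.id ℂ H + R) := by
  intro M hMc hMne
  haveI : CompleteSpace M := hMc.completeSpace_coe
  set T : H →L[ℂ] H := ContinuousLinearMap.id ℂ H + R with hT
  have hTapp : ∀ x : H, T x = x + R x := fun x => rfl
  -- the finite dimensional subspace F
  haveI : FiniteDimensional ℂ (LinearMap.range ((ContinuousLinearMap.adjoint R : H →L[ℂ] H) : H →ₗ[ℂ] H)) :=
    AuxAN.adjoint_finiteRank R hR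
  set F : Submodule ℂ H :=
    LinearMap.range (R : H →ₗ[ℂ] H) ⊔ LinearMap.range ((ContinuousLinearMap.adjoint R : H →L[ℂ] H) : H →ₗ[ℂ] H) with hF
  haveI : FiniteDimensional ℂ F := inferInstance
  -- vectors orthogonal to F are killed by R
  have hker : ∀ g : H, g ∈ Fᗮ → R g = 0 := by
    intro g hg
    have h0 : ⟪(R g : H), R g⟫_ℂ = 0 := by
      rw [← ContinuousLinearMap.adjoint_inner_left]
      exact (Submodule.mem_orthogonal F g).mp hg _
        (le_sup_right (a := LinearMap.range (R : H →ₗ[ℂ] H)) (LinearMap.mem_range_self _ _))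
    exact inner_self_eq_zero.mp h0
  -- the quadratic functional
  set φ : H → ℝ := fun x => ‖R x‖ ^ 2 + 2 * Complex.re ⟪x, R x⟫_ℂ with hφdef
  have hφcont : Continuous φ := by
    rw [hφdef]
    exact (R.continuous.norm.pow 2).add (continuous_const.mul
      (Complex.continuous_re.comp (continuous_id.inner R.continuous)))
  have hφnorm : ∀ x : H, ‖x‖ = 1 → ‖T x‖ ^ 2 = 1 + φ x := by
    intro x hx
    rw [hTapp, norm_add_sq (𝕜 := ℂ), hx]
    simp [hφdef]
    ring
  have hφinv : ∀ (x g : H), g ∈ Fᗮ → φ (x + g) = φ x := by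
    intro x g hg
    have hR0 : R (x + g) = R x := by rw [map_add, hker g hg, add_zero]
    have hginner : ⟪g, R x⟫_ℂ = 0 := by
      have := (Submodule.mem_orthogonal F g).mp hg (R x)
        (le_sup_left (b := LinearMap.range ((ContinuousLinearMap.adjoint R : H →L[ℂ] H) : H →ₗ[ℂ] H))
          (LinearMap.mem_range_self _ _))
      rwa [inner_eq_zero_symm] at this
    simp only [hφdef, hR0, inner_add_left, hginner, add_zero]
  -- subspaces of M
  set G : Submodule ℂ M := Fᗮ.comap (M.subtypeL : M →ₗ[ℂ] H) with hG
  have hGmem : ∀ m : M, m ∈ G ↔ (m : H) ∈ Fᗮ := fun m => Iff.rfl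
  have hGclosed : IsClosed (G : Set M) :=
    (Submodule.isClosed_orthogonal F).preimage continuous_subtype_val
  haveI : CompleteSpace G := hGclosed.completeSpace_coe
  set S : Submodule ℂ M := Gᗮ with hS
  -- S is finite dimensional
  haveI : FiniteDimensional ℂ S := by
    set f : S →ₗ[ℂ] F := (orthogonalProjection F).toLinearMap ∘ₗ M.subtype ∘ₗ S.subtype with hf
    have hinj : Function.Injective f := by
      rw [← LinearMap.ker_eq_bot, eq_bot_iff]
      rintro s hs
      have h0 : orthogonalProjection F ((s : M) : H) = 0 := hs
      have hFo : ((s : M) : H) ∈ Fᗮ := orthogonalProjection_eq_zero_iff.mp h0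
      have hsG : (s : M) ∈ G := hFo
      have : ⟪((s : M) : M), (s : M)⟫_ℂ = 0 :=
        (Submodule.mem_orthogonal G (s : M)).mp s.2 _ hsG
      have : (s : M) = 0 := inner_self_eq_zero.mp this
      simpa [Submodule.mem_bot] using Subtype.ext this
    exact FiniteDimensional.of_injective f hinj
  haveI : CompleteSpace S := FiniteDimensional.complete ℂ S
  -- maximize φ on the unit ball of S
  have hScpt : IsCompact (Metric.closedBall (0 : S) 1) := isCompact_closedBall _ _
  have hScont : ContinuousOn (fun s : S => φ (((s : M)) : H)) (Metric.closedBall (0 : S) 1) := by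
    fun_prop
  obtain ⟨s₀, hs₀mem, hs₀max⟩ := hScpt.exists_isMaxOn ⟨0, Metric.mem_closedBall_self zero_le_one⟩
    hScont
  have hs₀le : ‖s₀‖ ≤ 1 := by simpa using hs₀mem
  by_cases hGbot : G = ⊥
  · -- then M is finite dimensional
    haveI : FiniteDimensional ℂ M := by
      have hStop : S = ⊤ := by rw [hS, hGbot, Submodule.bot_orthogonal_eq_top]
      haveI : FiniteDimensional ℂ (⊤ : Submodule ℂ M) := hStop ▸ ‹FiniteDimensional ℂ ↥S›
      exact Module.Finite.equiv (Submodule.topEquiv (R := ℂ) (M := M))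
    exact AuxAN.fin_dim_case T M hMne
  · -- pick a unit vector in G
    obtain ⟨g', hg'G, hg'ne⟩ := Submodule.exists_mem_ne_zero_of_ne_bot hGbot
    have hg'norm : ‖g'‖ ≠ 0 := norm_ne_zero_iff.mpr hg'ne
    set g₀ : M := (‖g'‖⁻¹ : ℂ) • g' with hg₀def
    have hg₀G : g₀ ∈ G := Submodule.smul_mem G _ hg'G
    have hg₀norm : ‖g₀‖ = 1 := by
      rw [hg₀def]; exact AuxAN.norm_inv_smul g' hg'ne
    set t : ℝ := Real.sqrt (1 - ‖s₀‖ ^ 2) with ht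
    have ht0 : 0 ≤ t := Real.sqrt_nonneg _
    have ht2 : t ^ 2 = 1 - ‖s₀‖ ^ 2 :=
      Real.sq_sqrt (by nlinarith [norm_nonneg s₀])
    set x₀ : M := (s₀ : M) + (t : ℂ) • g₀ with hx₀def
    have hortho : ⟪((s₀ : M) : M), (t : ℂ) • g₀⟫_ℂ = 0 := by
      rw [inner_eq_zero_symm]
      exact (Submodule.mem_orthogonal G (s₀ : M)).mp s₀.2 _ (Submodule.smul_mem G _ hg₀G)
    have hx₀norm : ‖x₀‖ = 1 := by
      have hsq : ‖x₀‖ ^ 2 = 1 := by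
        have h' : ‖((s₀ : M) : M)‖ ^ 2 = ‖s₀‖ ^ 2 := rfl
        rw [hx₀def, norm_add_sq (𝕜 := ℂ), hortho, norm_smul]
        simp only [hg₀norm, mul_one, Complex.norm_real, Real.norm_eq_abs, Complex.zero_re,
          map_zero, mul_zero, add_zero, sq_abs, h']
        linarith [ht2]
      nlinarith [norm_nonneg x₀]
    -- x₀ maximizes φ on the unit sphere of M
    have hx₀φ : φ ((x₀ : M) : H) = φ (((s₀ : M) : M) : H) := by
      rw [hx₀def]
      push_cast
      exact hφinv _ _ (Submodule.smul_mem Fᗮ _ hg₀G)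
    have hmaxφ : ∀ m : M, ‖m‖ = 1 → φ ((m : M) : H) ≤ φ ((x₀ : M) : H) := by
      intro m hm
      set s : S := orthogonalProjection S m with hs'
      have hdm : m - (s : M) ∈ G := by
        have hSo : Sᗮ = G := by rw [hS]; exact Submodule.orthogonal_orthogonal G
        have h1 := Submodule.sub_starProjection_mem_orthogonal (K := S) m
        rw [hSo] at h1
        exact h1
      have hφm : φ ((m : M) : H) = φ (((s : M) : M) : H) := by
        have hmeq : (m : H) = ((s : M) : H) + ((m - (s : M) : M) : H) := by push_cast; abel
        rw [hmeq]
        exact hφinv _ _ hdm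
      have hsle : ‖s‖ ≤ 1 := by
        have h1 : ‖s‖ ≤ ‖orthogonalProjection S‖ * ‖m‖ := (orthogonalProjection S).le_opNorm m
        have h2 : ‖orthogonalProjection S‖ ≤ 1 := orthogonalProjection_norm_le S
        rw [hm] at h1
        nlinarith [norm_nonneg m]
      have := hs₀max (by simpa using hsle : s ∈ Metric.closedBall (0 : S) 1)
      rw [hφm, hx₀φ]
      exact this
    -- conclude
    have hmaxT : ∀ m : M, ‖m‖ = 1 → ‖T ↑m‖ ≤ ‖T ↑x₀‖ := by
      intro m hm
      have h1 := hφnorm (↑m) (by simpa using hm)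
      have h2 := hφnorm (↑x₀) (by simpa using hx₀norm)
      have h3 := hmaxφ m hm
      nlinarith [norm_nonneg (T ↑m), norm_nonneg (T ↑x₀)]
    exact ⟨↑x₀, x₀.2, by simpa using hx₀norm,
      AuxAN.norm_eq_of_max T M x₀ (by simpa using hx₀norm) hmaxT⟩
end

section
/- An orthogonal projection Q on a Hilbert space H is an AN operator if and only if the range of Q or the kernel of Q is finite-dimensional. -/
open scoped ComplexInnerProductSpace

section ANHelpers

variable {H : Type*} [NormedAddCommGroup H] [InnerProductSpace ℂ H]

private lemma adj_inner' [CompleteSpace H] {Q : H →L[ℂ] H} (hQ : IsSelfAdjoint Q) (u v : H) :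
    ⟪Q u, v⟫ = ⟪u, Q v⟫ := by
  conv_lhs => rw [← hQ.adjoint_eq]
  exact ContinuousLinearMap.adjoint_inner_left Q v u

private lemma pyth' [CompleteSpace H] {Q : H →L[ℂ] H} (hQ : IsSelfAdjoint Q)
    (hQ2 : Q ∘L Q = Q) (x : H) :
    ‖x‖ ^ 2 = ‖Q x‖ ^ 2 + ‖x - Q x‖ ^ 2 := by
  have horth : ⟪Q x, x - Q x⟫ = 0 := by
    rw [adj_inner' hQ]
    have : Q (x - Q x) = 0 := by
      have := congrArg (fun T => T x) hQ2
      simp only [ContinuousLinearMap.comp_apply] at this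
      simp [map_sub, this]
    simp [this]
  have := norm_add_sq_eq_norm_sq_add_norm_sq_of_inner_eq_zero (Q x) (x - Q x) horth
  simpa [pow_two] using this

private lemma norm_Q_le' [CompleteSpace H] {Q : H →L[ℂ] H} (hQ : IsSelfAdjoint Q)
    (hQ2 : Q ∘L Q = Q) (x : H) : ‖Q x‖ ≤ ‖x‖ := by
  have h := pyth' hQ hQ2 x
  nlinarith [norm_nonneg (Q x), norm_nonneg x, sq_nonneg (‖x - Q x‖), norm_nonneg (x - Q x)]

private lemma eq_of_norm_eq' [CompleteSpace H] {Q : H →L[ℂ] H} (hQ : IsSelfAdjoint Q)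
    (hQ2 : Q ∘L Q = Q) {x : H} (h : ‖Q x‖ = ‖x‖) : Q x = x := by
  have hp := pyth' hQ hQ2 x
  rw [h] at hp
  have : ‖x - Q x‖ = 0 := by nlinarith [norm_nonneg (x - Q x)]
  have h2 := norm_eq_zero.mp this
  have : x = Q x := by linear_combination (norm := abel1) h2
  exact this.symm

private lemma restrict_norm_le' (Q : H →L[ℂ] H) (N : Submodule ℂ H) {C : ℝ} (hC : 0 ≤ C)
    (h : ∀ x ∈ N, ‖Q x‖ ≤ C * ‖x‖) : ‖Q.comp N.subtypeL‖ ≤ C := by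
  refine ContinuousLinearMap.opNorm_le_bound _ hC fun y => ?_
  simpa using h (y : H) y.2

private lemma restrict_norm_ge' (Q : H →L[ℂ] H) (N : Submodule ℂ H) {x : H} (hx : x ∈ N) :
    ‖Q x‖ ≤ ‖Q.comp N.subtypeL‖ * ‖x‖ := by
  simpa using (Q.comp N.subtypeL).le_opNorm ⟨x, hx⟩

private lemma exists_unit_vector' {N : Submodule ℂ H} (hN : N ≠ ⊥) : ∃ x ∈ N, ‖x‖ = 1 := by
  obtain ⟨y, hyN, hy0⟩ := Submodule.exists_mem_ne_zero_of_ne_bot hN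
  refine ⟨(‖y‖⁻¹ : ℂ) • y, N.smul_mem _ hyN, ?_⟩
  have : (0:ℝ) < ‖y‖ := norm_pos_iff.mpr hy0
  rw [norm_smul, norm_inv, Complex.norm_real, Real.norm_eq_abs, abs_of_nonneg (norm_nonneg y),
    inv_mul_cancel₀ this.ne']

private lemma findim_attains' (Q : H →L[ℂ] H) (N : Submodule ℂ H)
    (hfin : FiniteDimensional ℂ N) (hN : N ≠ ⊥) :
    ∃ x ∈ N, ‖x‖ = 1 ∧ ‖Q x‖ = ‖Q.comp N.subtypeL‖ := by
  set T := Q.comp N.subtypeL with hT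
  have hnt : Nontrivial N := Submodule.nontrivial_iff_ne_bot.mpr hN
  have hcomp : IsCompact (Metric.sphere (0 : N) 1) := isCompact_sphere 0 1
  have hne : (Metric.sphere (0 : N) 1).Nonempty := NormedSpace.sphere_nonempty.mpr zero_le_one
  obtain ⟨x₀, hx₀mem, hx₀max⟩ := hcomp.exists_isMaxOn hne
    (Continuous.continuousOn (by continuity : Continuous fun y : N => ‖T y‖))
  have hx₀norm : ‖x₀‖ = 1 := by simpa using hx₀mem
  refine ⟨(x₀ : H), x₀.2, by simpa using hx₀norm, ?_⟩
  have h1 : ‖T x₀‖ ≤ ‖T‖ := by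
    calc ‖T x₀‖ ≤ ‖T‖ * ‖x₀‖ := T.le_opNorm x₀
    _ = ‖T‖ := by rw [hx₀norm, mul_one]
  have h2 : ‖T‖ ≤ ‖T x₀‖ := by
    refine ContinuousLinearMap.opNorm_le_bound _ (norm_nonneg _) fun y => ?_
    rcases eq_or_ne y 0 with rfl | hy
    · simp
    · have hyn : (0:ℝ) < ‖y‖ := norm_pos_iff.mpr hy
      have hu : ((‖y‖⁻¹ : ℂ) • y) ∈ Metric.sphere (0 : N) 1 := by
        simp only [mem_sphere_iff_norm, sub_zero, norm_smul, norm_inv, Complex.norm_real,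
          Real.norm_eq_abs, abs_of_nonneg (norm_nonneg y)]
        exact inv_mul_cancel₀ hyn.ne'
      have := hx₀max hu
      simp only [Set.mem_setOf_eq, map_smul, norm_smul] at this
      have h3 : ‖(‖y‖⁻¹ : ℂ)‖ * ‖T y‖ ≤ ‖T x₀‖ := this
      have h4 : ‖(‖y‖⁻¹ : ℂ)‖ = ‖y‖⁻¹ := by
        simp [abs_of_nonneg (norm_nonneg y)]
      rw [h4] at h3
      calc ‖T y‖ = ‖y‖⁻¹ * ‖T y‖ * ‖y‖ := by
            rw [mul_comm (‖y‖⁻¹) _, mul_assoc, inv_mul_cancel₀ hyn.ne', mul_one]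
      _ ≤ ‖T x₀‖ * ‖y‖ := mul_le_mul_of_nonneg_right h3 (le_of_lt hyn)
  have : ‖T x₀‖ = ‖T‖ := le_antisymm h1 h2
  simpa [hT] using this

private lemma exists_orthonormal_seq' [CompleteSpace H] (h : ¬ FiniteDimensional ℂ H) :
    ∃ v : ℕ → H, Orthonormal ℂ v := by
  obtain ⟨w, b, hb⟩ := exists_hilbertBasis ℂ H
  have hw : w.Infinite := by
    intro hfin
    apply h
    have hd := b.dense_span
    rw [hb, Subtype.range_coe] at hd
    have hfd : FiniteDimensional ℂ (Submodule.span ℂ w : Submodule ℂ H) :=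
      FiniteDimensional.span_of_finite ℂ hfin
    have hclosed : IsClosed ((Submodule.span ℂ w : Submodule ℂ H) : Set H) :=
      Submodule.closed_of_finiteDimensional _
    have htop : (Submodule.span ℂ w : Submodule ℂ H) = ⊤ := by
      rw [← hd]
      exact (IsClosed.submodule_topologicalClosure_eq hclosed).symm
    rw [htop] at hfd
    exact (Submodule.topEquiv (R := ℂ) (M := H)).finiteDimensional
  let emb : ℕ ↪ w := hw.natEmbedding
  refine ⟨fun n => (emb n : H), ?_⟩
  have hon := b.orthonormal
  rw [hb] at hon
  exact hon.comp emb emb.injective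

private lemma range_isClosed' [CompleteSpace H] (Q : H →L[ℂ] H) (hQ2 : Q ∘L Q = Q) :
    IsClosed ((LinearMap.range (Q : H →ₗ[ℂ] H) : Submodule ℂ H) : Set H) := by
  have hker : (LinearMap.range (Q : H →ₗ[ℂ] H) : Submodule ℂ H)
      = LinearMap.ker ((ContinuousLinearMap.id ℂ H - Q : H →L[ℂ] H) : H →ₗ[ℂ] H) := by
    ext x
    constructor
    · rintro ⟨y, rfl⟩
      have := congrArg (fun T => T y) hQ2
      simp only [ContinuousLinearMap.comp_apply] at this
      simp [LinearMap.mem_ker, this]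
    · intro hx
      have hx' : x - Q x = 0 := hx
      exact ⟨x, (sub_eq_zero.mp hx').symm⟩
  rw [hker]
  exact ContinuousLinearMap.isClosed_ker (ContinuousLinearMap.id ℂ H - Q)

end ANHelpers

set_option maxHeartbeats 1000000 in
set_option synthInstance.maxHeartbeats 400000 in
theorem projection_AN_iff {H : Type*}
    [NormedAddCommGroup H] [InnerProductSpace ℂ H] [CompleteSpace H]
    (Q : H →L[ℂ] H) (hQ : IsSelfAdjoint Q) (hQ2 : Q ∘L Q = Q) :
    IsAN Q ↔ FiniteDimensional ℂ (LinearMap.range (Q : H →ₗ[ℂ] H)) ∨ FiniteDimensional ℂ (LinearMap.ker (Q : H →ₗ[ℂ] H)) := by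
  have hQapp : ∀ x, Q (Q x) = Q x := by
    intro x
    have := congrArg (fun T => T x) hQ2
    simpa using this
  have hQrange : ∀ x ∈ LinearMap.range (Q : H →ₗ[ℂ] H), Q x = x := by
    rintro x ⟨y, rfl⟩
    exact hQapp y
  constructor
  · -- forward direction
    intro hAN
    by_contra hcon
    rw [not_or] at hcon
    obtain ⟨hRinf, hKinf⟩ := hcon
    haveI hcR : CompleteSpace (LinearMap.range (Q : H →ₗ[ℂ] H)) := (range_isClosed' Q hQ2).completeSpace_coe
    haveI hcK : CompleteSpace (LinearMap.ker (Q : H →ₗ[ℂ] H)) :=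
      (ContinuousLinearMap.isClosed_ker Q).completeSpace_coe
    obtain ⟨e', he'⟩ := exists_orthonormal_seq' hRinf
    obtain ⟨f', hf'⟩ := exists_orthonormal_seq' hKinf
    set e : ℕ → H := fun n => ((e' n : LinearMap.range (Q : H →ₗ[ℂ] H)) : H) with he_def
    set f : ℕ → H := fun n => ((f' n : LinearMap.ker (Q : H →ₗ[ℂ] H)) : H) with hf_def
    have he : Orthonormal ℂ e := he'.comp_linearIsometry (LinearMap.range (Q : H →ₗ[ℂ] H)).subtypeₗᵢ
    have hf : Orthonormal ℂ f := hf'.comp_linearIsometry (LinearMap.ker (Q : H →ₗ[ℂ] H)).subtypeₗᵢ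
    have heR : ∀ n, Q (e n) = e n := fun n => hQrange _ (e' n).2
    have hfK : ∀ n, Q (f n) = 0 := fun n => (f' n).2
    have hef : ∀ m n, ⟪e m, f n⟫ = 0 := by
      intro m n
      calc ⟪e m, f n⟫ = ⟪Q (e m), f n⟫ := by rw [heR]
      _ = ⟪e m, Q (f n)⟫ := adj_inner' hQ _ _
      _ = 0 := by rw [hfK]; simp
    set t : ℕ → ℝ := fun n => (1/2) * (1/((n:ℝ)+1)) with ht_def
    have htpos : ∀ n, 0 < t n := by
      intro n; positivity
    have htlt : ∀ n, t n < 1 := by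
      intro n
      have h1 : (1:ℝ)/((n:ℝ)+1) ≤ 1 := by
        rw [div_le_one (by positivity)]
        linarith [Nat.cast_nonneg (α := ℝ) n]
      simp only [ht_def]
      nlinarith
    set c : ℕ → ℝ := fun n => Real.sqrt (1 - t n) with hc_def
    set s : ℕ → ℝ := fun n => Real.sqrt (t n) with hs_def
    have hc_nonneg : ∀ n, 0 ≤ c n := fun n => Real.sqrt_nonneg _
    have hs_nonneg : ∀ n, 0 ≤ s n := fun n => Real.sqrt_nonneg _
    have hc2 : ∀ n, c n ^ 2 = 1 - t n := fun n => Real.sq_sqrt (by linarith [htlt n])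
    have hs2 : ∀ n, s n ^ 2 = t n := fun n => Real.sq_sqrt (le_of_lt (htpos n))
    set x : ℕ → H := fun n => (c n : ℂ) • e n + (s n : ℂ) • f n with hx_def
    have hQx : ∀ n, Q (x n) = (c n : ℂ) • e n := by
      intro n
      simp [hx_def, map_add, map_smul, heR n, hfK n]
    have hnorm_ce : ∀ n, ‖(c n : ℂ) • e n‖ = c n := by
      intro n
      rw [norm_smul, Complex.norm_real, Real.norm_eq_abs, abs_of_nonneg (hc_nonneg n),
        he.1 n, mul_one]
    have hxnorm : ∀ n, ‖x n‖ = 1 := by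
      intro n
      have horth : ⟪(c n : ℂ) • e n, (s n : ℂ) • f n⟫ = 0 := by
        rw [inner_smul_left, inner_smul_right, hef n n]
        ring
      have hsq := norm_add_sq_eq_norm_sq_add_norm_sq_of_inner_eq_zero _ _ horth
      have hnf : ‖(s n : ℂ) • f n‖ = s n := by
        rw [norm_smul, Complex.norm_real, Real.norm_eq_abs, abs_of_nonneg (hs_nonneg n),
          hf.1 n, mul_one]
      have hx2 : ‖x n‖ * ‖x n‖ = 1 := by
        rw [hx_def]
        simp only []
        rw [hsq, hnorm_ce n, hnf]
        nlinarith [hc2 n, hs2 n]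
      rcases mul_self_eq_one_iff.mp hx2 with h | h
      · exact h
      · linarith [norm_nonneg (x n)]
    set M : Submodule ℂ H := (Submodule.span ℂ (Set.range x)).topologicalClosure with hM_def
    have hxM : ∀ n, x n ∈ M :=
      fun n => Submodule.le_topologicalClosure _ (Submodule.subset_span ⟨n, rfl⟩)
    have hMclosed : IsClosed (M : Set H) := Submodule.isClosed_topologicalClosure _
    have hMne : M ≠ ⊥ := by
      rw [Submodule.ne_bot_iff]
      refine ⟨x 0, hxM 0, fun h0 => ?_⟩
      have := hxnorm 0
      rw [h0] at this
      simpa using this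
    have hTle : ‖Q.comp M.subtypeL‖ ≤ 1 :=
      restrict_norm_le' Q M zero_le_one fun y _ => by
        simpa using norm_Q_le' hQ hQ2 y
    have hTge : ∀ n, c n ≤ ‖Q.comp M.subtypeL‖ := by
      intro n
      have := restrict_norm_ge' Q M (hxM n)
      rw [hQx n, hnorm_ce n, hxnorm n, mul_one] at this
      exact this
    have hclim : Filter.Tendsto c Filter.atTop (nhds 1) := by
      have h0 : Filter.Tendsto t Filter.atTop (nhds 0) := by
        simpa [ht_def] using (tendsto_one_div_add_atTop_nhds_zero_nat).const_mul (1/2 : ℝ)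
      have h1 : Filter.Tendsto (fun n => 1 - t n) Filter.atTop (nhds 1) := by
        simpa using (tendsto_const_nhds (x := (1:ℝ))).sub h0
      have := (Real.continuous_sqrt.tendsto 1).comp h1
      simpa [hc_def, Function.comp_def] using this
    have hT1 : ‖Q.comp M.subtypeL‖ = 1 := by
      refine le_antisymm hTle ?_
      exact le_of_tendsto hclim (Filter.Eventually.of_forall hTge)
    obtain ⟨y, hyM, hynorm, hyQ⟩ := hAN M hMclosed hMne
    rw [hT1] at hyQ
    have hyfix : Q y = y := eq_of_norm_eq' hQ hQ2 (by rw [hyQ, hynorm])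
    -- show ⟪x n, y⟫ = 0 for all n
    have hkey : ∀ n, ⟪x n, y⟫ = 0 := by
      intro n
      set φ : H →L[ℂ] ℂ := innerSL ℂ (e n) - (c n : ℂ) • innerSL ℂ (x n) with hφ_def
      have hspan : Submodule.span ℂ (Set.range x) ≤ LinearMap.ker (φ : H →ₗ[ℂ] ℂ) := by
        rw [Submodule.span_le]
        rintro _ ⟨m, rfl⟩
        have hexm : ⟪e n, x m⟫ = if n = m then (c n : ℂ) else 0 := by
          rw [hx_def]
          simp only []
          rw [inner_add_right, inner_smul_right, inner_smul_right,
            orthonormal_iff_ite.mp he n m, hef n m]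
          by_cases h : n = m <;> simp [h]
        have hxxm : ⟪x n, x m⟫ = if n = m then 1 else 0 := by
          by_cases h : n = m
          · subst h
            rw [inner_self_eq_norm_sq_to_K, hxnorm n]
            simp
          · rw [hx_def]
            simp only []
            have hfe : ⟪f n, e m⟫ = 0 := by
              have := hef m n
              rw [← inner_conj_symm] at this
              simpa using congrArg (starRingEnd ℂ) this
            rw [inner_add_left, inner_add_right, inner_add_right,
              inner_smul_left, inner_smul_right, inner_smul_left, inner_smul_right,
              inner_smul_left, inner_smul_right, inner_smul_left, inner_smul_right,
              orthonormal_iff_ite.mp he n m, orthonormal_iff_ite.mp hf n m,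
              hef n m, hfe]
            simp [h]
        rw [SetLike.mem_coe, LinearMap.mem_ker, ContinuousLinearMap.coe_coe]
        have hφapp : φ (x m) = ⟪e n, x m⟫ - (c n : ℂ) * ⟪x n, x m⟫ := by
          simp [hφ_def, smul_eq_mul]
        rw [hφapp, hexm, hxxm]
        by_cases h : n = m <;> simp [h]
      have hMker : M ≤ LinearMap.ker (φ : H →ₗ[ℂ] ℂ) := by
        rw [hM_def]
        exact Submodule.topologicalClosure_minimal _ hspan (ContinuousLinearMap.isClosed_ker φ)
      have hφy : ⟪e n, y⟫ = (c n : ℂ) * ⟪x n, y⟫ := by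
        have := hMker hyM
        simp only [LinearMap.mem_ker, ContinuousLinearMap.coe_coe, hφ_def, ContinuousLinearMap.coe_sub',
          Pi.sub_apply, ContinuousLinearMap.coe_smul', Pi.smul_apply,
          innerSL_apply_apply, smul_eq_mul, sub_eq_zero] at this
        exact this
      have ha : ⟪x n, y⟫ = (c n : ℂ) * ⟪e n, y⟫ := by
        calc ⟪x n, y⟫ = ⟪x n, Q y⟫ := by rw [hyfix]
        _ = ⟪Q (x n), y⟫ := (adj_inner' hQ (x n) y).symm
        _ = ⟪(c n : ℂ) • e n, y⟫ := by rw [hQx n]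
        _ = (c n : ℂ) * ⟪e n, y⟫ := by
            rw [inner_smul_left, Complex.conj_ofReal]
      have hcomb : (1 - (c n : ℂ) ^ 2) * ⟪x n, y⟫ = 0 := by
        linear_combination ha + (c n : ℂ) * hφy
      have hcne : (1 - (c n : ℂ) ^ 2) ≠ 0 := by
        have : ((1 - c n ^ 2 : ℝ) : ℂ) ≠ 0 := by
          rw [Complex.ofReal_ne_zero, hc2 n]
          have := htpos n
          intro hcontra
          rw [sub_sub_cancel] at hcontra
          linarith
        simpa using this
      have := mul_eq_zero.mp hcomb
      tauto
    -- conclude y = 0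
    have hy0 : y = 0 := by
      set ψ : H →L[ℂ] ℂ := innerSL ℂ y with hψ_def
      have hspan : Submodule.span ℂ (Set.range x) ≤ LinearMap.ker (ψ : H →ₗ[ℂ] ℂ) := by
        rw [Submodule.span_le]
        rintro _ ⟨m, rfl⟩
        have : ⟪y, x m⟫ = 0 := by
          rw [← inner_conj_symm, hkey m, map_zero]
        simpa [hψ_def, LinearMap.mem_ker] using this
      have hMker : M ≤ LinearMap.ker (ψ : H →ₗ[ℂ] ℂ) := by
        rw [hM_def]
        exact Submodule.topologicalClosure_minimal _ hspan (ContinuousLinearMap.isClosed_ker ψ)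
      have := hMker hyM
      simp only [LinearMap.mem_ker, hψ_def, innerSL_apply_apply] at this
      exact inner_self_eq_zero.mp this
    rw [hy0] at hynorm
    simpa using hynorm
  · -- backward direction
    intro hfin M hMclosed hMne
    rcases hfin with hR | hK
    · -- range finite dimensional
      set K : Submodule ℂ H := LinearMap.ker (Q : H →ₗ[ℂ] H) with hK_def
      set N : Submodule ℂ H := M ⊓ K with hN_def
      have hNclosed : IsClosed (N : Set H) := by
        rw [hN_def]
        have : ((M ⊓ K : Submodule ℂ H) : Set H) = (M : Set H) ∩ (K : Set H) := rfl
        rw [this]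
        exact hMclosed.inter (ContinuousLinearMap.isClosed_ker Q)
      haveI : CompleteSpace N := hNclosed.completeSpace_coe
      set M₀ : Submodule ℂ H := M ⊓ Nᗮ with hM₀_def
      -- decomposition facts
      have hdecomp : ∀ z ∈ M, ∃ w ∈ M₀, Q z = Q w ∧ ‖w‖ ≤ ‖z‖ := by
        intro z hz
        set p : H := (N.orthogonalProjectionOnto z : H) with hp_def
        have hpN : p ∈ N := (N.orthogonalProjectionOnto z).2
        have hzpO : z - p ∈ Nᗮ := N.sub_starProjection_mem_orthogonal z
        have hzpM : z - p ∈ M := M.sub_mem hz hpN.1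
        refine ⟨z - p, ⟨hzpM, hzpO⟩, ?_, ?_⟩
        · have hQp : Q p = 0 := hpN.2
          rw [map_sub, hQp, sub_zero]
        · have horth : ⟪p, z - p⟫ = 0 := (Submodule.mem_orthogonal N (z - p)).mp hzpO p hpN
          have hsq := norm_add_sq_eq_norm_sq_add_norm_sq_of_inner_eq_zero _ _ horth
          have hzz : p + (z - p) = z := by abel
          rw [hzz] at hsq
          have h1 : ‖z - p‖ ^ 2 ≤ ‖z‖ ^ 2 := by nlinarith [sq_nonneg ‖p‖]
          nlinarith [norm_nonneg (z - p), norm_nonneg z]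
      have hM₀fin : FiniteDimensional ℂ M₀ := by
        let g : M₀ →ₗ[ℂ] LinearMap.range (Q : H →ₗ[ℂ] H) :=
          LinearMap.codRestrict (LinearMap.range (Q : H →ₗ[ℂ] H))
            ((Q : H →ₗ[ℂ] H).comp M₀.subtype) (fun v => LinearMap.mem_range_self _ _)
        have hginj : Function.Injective g := by
          intro v w hvw
          have hQvw : Q (v : H) = Q (w : H) := congrArg Subtype.val hvw
          have hvwK : ((v : H) - (w : H)) ∈ K := by
            simp [hK_def, LinearMap.mem_ker, map_sub, hQvw]
          have hvwM : ((v : H) - (w : H)) ∈ M := M.sub_mem v.2.1 w.2.1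
          have hvwN : ((v : H) - (w : H)) ∈ N := ⟨hvwM, hvwK⟩
          have hvwO : ((v : H) - (w : H)) ∈ Nᗮ := Nᗮ.sub_mem v.2.2 w.2.2
          have : ((v : H) - (w : H)) ∈ N ⊓ Nᗮ := ⟨hvwN, hvwO⟩
          rw [N.orthogonal_disjoint.eq_bot] at this
          have := Submodule.mem_bot ℂ |>.mp this
          exact Subtype.ext (sub_eq_zero.mp this)
        exact FiniteDimensional.of_injective g hginj
      by_cases hM₀ : M₀ = ⊥
      · -- Q vanishes on M
        have hQM : ∀ z ∈ M, Q z = 0 := by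
          intro z hz
          obtain ⟨w, hw, hQzw, _⟩ := hdecomp z hz
          rw [hM₀, Submodule.mem_bot] at hw
          rw [hQzw, hw, map_zero]
        have hT0 : ‖Q.comp M.subtypeL‖ = 0 := by
          refine le_antisymm ?_ (norm_nonneg (Q.comp M.subtypeL))
          refine restrict_norm_le' Q M le_rfl fun z hz => ?_
          rw [hQM z hz]
          simp
        obtain ⟨z, hzM, hznorm⟩ := exists_unit_vector' hMne
        exact ⟨z, hzM, hznorm, by rw [hQM z hzM, hT0, norm_zero]⟩
      · have hle1 : ‖Q.comp M.subtypeL‖ ≤ ‖Q.comp M₀.subtypeL‖ := by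
          refine restrict_norm_le' Q M (norm_nonneg (Q.comp M₀.subtypeL)) fun z hz => ?_
          obtain ⟨w, hw, hQzw, hwz⟩ := hdecomp z hz
          calc ‖Q z‖ = ‖Q w‖ := by rw [hQzw]
          _ ≤ ‖Q.comp M₀.subtypeL‖ * ‖w‖ := restrict_norm_ge' Q M₀ hw
          _ ≤ ‖Q.comp M₀.subtypeL‖ * ‖z‖ :=
              mul_le_mul_of_nonneg_left hwz (norm_nonneg (Q.comp M₀.subtypeL))
        have hle2 : ‖Q.comp M₀.subtypeL‖ ≤ ‖Q.comp M.subtypeL‖ := by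
          refine restrict_norm_le' Q M₀ (norm_nonneg (Q.comp M.subtypeL)) fun z hz => ?_
          exact restrict_norm_ge' Q M hz.1
        have heq : ‖Q.comp M₀.subtypeL‖ = ‖Q.comp M.subtypeL‖ := le_antisymm hle2 hle1
        obtain ⟨z, hzM₀, hznorm, hzQ⟩ := findim_attains' Q M₀ hM₀fin hM₀
        exact ⟨z, hzM₀.1, hznorm, by rw [hzQ, heq]⟩
    · -- kernel finite dimensional
      by_cases hMR : M ⊓ LinearMap.range (Q : H →ₗ[ℂ] H) = ⊥
      · -- M is finite dimensional
        have hMfin : FiniteDimensional ℂ M := by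
          let g : M →ₗ[ℂ] LinearMap.ker (Q : H →ₗ[ℂ] H) :=
            LinearMap.codRestrict (LinearMap.ker (Q : H →ₗ[ℂ] H))
              ((LinearMap.id - (Q : H →ₗ[ℂ] H)).comp M.subtype)
              (fun v => by
                simp only [LinearMap.mem_ker, LinearMap.comp_apply, LinearMap.sub_apply,
                  LinearMap.id_apply, Submodule.coe_subtype, ContinuousLinearMap.coe_coe,
                  map_sub, hQapp]
                exact sub_self _)
          have hginj : Function.Injective g := by
            intro v w hvw
            have h1 : ((v : H) - Q (v : H)) = ((w : H) - Q (w : H)) := by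
              have := congrArg Subtype.val hvw
              simpa [g, LinearMap.codRestrict, LinearMap.sub_apply] using this
            have h2 : (v : H) - (w : H) = Q ((v : H) - (w : H)) := by
              rw [map_sub]
              linear_combination (norm := abel1) h1
            have h3 : ((v : H) - (w : H)) ∈ M ⊓ LinearMap.range (Q : H →ₗ[ℂ] H) :=
              ⟨M.sub_mem v.2 w.2, ⟨(v : H) - (w : H), h2.symm⟩⟩
            rw [hMR, Submodule.mem_bot] at h3
            exact Subtype.ext (sub_eq_zero.mp h3)
          exact FiniteDimensional.of_injective g hginj
        exact findim_attains' Q M hMfin hMne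
      · -- there is a unit vector in M ∩ range Q
        obtain ⟨y, hyMR, hynorm⟩ := exists_unit_vector' hMR
        have hyM : y ∈ M := hyMR.1
        have hyfix : Q y = y := hQrange y hyMR.2
        have hT1 : ‖Q.comp M.subtypeL‖ = 1 := by
          refine le_antisymm ?_ ?_
          · refine restrict_norm_le' Q M zero_le_one fun z _ => by
              simpa using norm_Q_le' hQ hQ2 z
          · have := restrict_norm_ge' Q M hyM
            rw [hyfix, hynorm, mul_one] at this
            exact this
        exact ⟨y, hyM, hynorm, by rw [hyfix, hynorm, hT1]⟩
end

section
/- A partial isometry U with initial domain M (i.e., ‖U x‖ = ‖x‖ for x ∈ M and U x = 0 for x ∈ M⊥) is an AN operator if and only if M or M⊥ is finite-dimensional. -/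
open scoped InnerProductSpace ComplexConjugate

noncomputable def seqA (n : ℕ) : ℝ := Real.sqrt (1 - 1/((n:ℝ)+2))
noncomputable def seqB (n : ℕ) : ℝ := Real.sqrt (1/((n:ℝ)+2))

lemma seq_facts (n : ℕ) : 0 ≤ seqA n ∧ seqA n < 1 ∧ 0 < seqB n ∧ seqA n ^2 + seqB n ^2 = 1 := by
  have h2 : (0:ℝ) < (n:ℝ) + 2 := by positivity
  have hub : 1/((n:ℝ)+2) ≤ 1/2 := by
    apply div_le_div_of_nonneg_left one_pos.le (by norm_num)
    · linarith [Nat.cast_nonneg (α := ℝ) n]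
  have hpos : (0:ℝ) < 1/((n:ℝ)+2) := by positivity
  have h1 : (0:ℝ) ≤ 1 - 1/((n:ℝ)+2) := by linarith
  refine ⟨Real.sqrt_nonneg _, ?_, Real.sqrt_pos.mpr hpos, ?_⟩
  · have : seqA n < Real.sqrt 1 := by
      apply Real.sqrt_lt_sqrt h1; linarith
    simpa [Real.sqrt_one] using this
  · rw [seqA, seqB, Real.sq_sqrt h1, Real.sq_sqrt hpos.le]; ring

lemma seqA_tendsto : Filter.Tendsto seqA Filter.atTop (nhds 1) := by
  have h0 : Filter.Tendsto (fun n : ℕ => 1/((n:ℝ)+2)) Filter.atTop (nhds 0) := by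
    simp only [one_div]
    exact tendsto_inv_atTop_zero.comp
      (Filter.tendsto_atTop_add_const_right _ 2 tendsto_natCast_atTop_atTop)
  have h1 : Filter.Tendsto (fun n : ℕ => 1 - 1/((n:ℝ)+2)) Filter.atTop (nhds 1) := by
    simpa using (tendsto_const_nhds (x := (1:ℝ)) (f := Filter.atTop (α := ℕ))).sub h0
  have := (Real.continuous_sqrt.tendsto 1).comp h1
  unfold seqA
  simpa [Real.sqrt_one, Function.comp_def, one_div] using this


lemma findim_attains {E F : Type*} [NormedAddCommGroup E] [NormedSpace ℂ E]
    [NormedAddCommGroup F] [NormedSpace ℂ F] [FiniteDimensional ℂ E] [Nontrivial E]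
    (T : E →L[ℂ] F) : ∃ x : E, ‖x‖ = 1 ∧ ‖T x‖ = ‖T‖ := by
  obtain ⟨x₀, hx₀⟩ := NormedSpace.sphere_nonempty (E := E) (x := 0) (r := 1) |>.mpr zero_le_one
  have hcomp : IsCompact (Metric.sphere (0 : E) 1) := isCompact_sphere 0 1
  have hcont : ContinuousOn (fun x : E => ‖T x‖) (Metric.sphere 0 1) :=
    (T.continuous.norm).continuousOn
  obtain ⟨x, hxs, hmax⟩ := hcomp.exists_isMaxOn ⟨x₀, hx₀⟩ hcont
  have hx1 : ‖x‖ = 1 := by simpa using hxs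
  refine ⟨x, hx1, le_antisymm (by simpa [hx1] using T.le_opNorm x) ?_⟩
  refine T.opNorm_le_bound (norm_nonneg _) fun y => ?_
  rcases eq_or_ne y 0 with rfl | hy
  · simp
  · have hyn : ‖y‖ ≠ 0 := norm_ne_zero_iff.mpr hy
    have hmem : (‖y‖⁻¹ : ℂ) • y ∈ Metric.sphere (0 : E) 1 := by
      simp [norm_smul, hyn]
    have h2 : ‖y‖⁻¹ * ‖T y‖ ≤ ‖T x‖ := by
      have h3 := hmax hmem
      simpa [map_smul, norm_smul, norm_inv, Complex.norm_real,
        Real.norm_eq_abs, abs_of_nonneg (norm_nonneg y)] using h3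
    calc ‖T y‖ = ‖y‖ * (‖y‖⁻¹ * ‖T y‖) := by field_simp
    _ ≤ ‖y‖ * ‖T x‖ := by
        apply mul_le_mul_of_nonneg_left _ (norm_nonneg y)
        exact h2
    _ = ‖T x‖ * ‖y‖ := mul_comm _ _

lemma attains_of_finite_range {E H : Type*}
    [NormedAddCommGroup E] [InnerProductSpace ℂ E] [CompleteSpace E]
    [NormedAddCommGroup H] [InnerProductSpace ℂ H] [CompleteSpace H]
    (T : E →L[ℂ] H) (F : Submodule ℂ H) [FiniteDimensional ℂ F]
    (hrange : ∀ y, T y ∈ F) (hT : T ≠ 0) :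
    ∃ x : E, ‖x‖ = 1 ∧ ‖T x‖ = ‖T‖ := by
  haveI : Nontrivial F := by
    refine Submodule.nontrivial_iff_ne_bot.mpr fun hbot => hT ?_
    ext y
    have := hrange y
    rw [hbot, Submodule.mem_bot] at this
    simpa using this
  set A := ContinuousLinearMap.adjoint T with hA
  have hAnorm : ‖A‖ = ‖T‖ :=
    (ContinuousLinearMap.adjoint : (E →L[ℂ] H) ≃ₗᵢ⋆[ℂ] (H →L[ℂ] E)).norm_map T
  -- A vanishes on Fᗮ
  have hAzero : ∀ w ∈ Fᗮ, A w = 0 := by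
    intro w hw
    have : ⟪A w, A w⟫_ℂ = 0 := by
      rw [ContinuousLinearMap.adjoint_inner_left]
      exact (Submodule.mem_orthogonal' F w).mp hw _ (hrange _)
    exact inner_self_eq_zero.mp this
  set B := A.comp F.subtypeL with hB
  have hAP : ∀ z : H, A z = B (Submodule.orthogonalProjectionOnto F z) := by
    intro z
    have h1 : A z = A (Submodule.orthogonalProjectionOnto F z) + A (z - Submodule.orthogonalProjectionOnto F z) := by
      rw [← map_add]; congr 1; abel
    rw [h1, hAzero (z - (Submodule.orthogonalProjectionOnto F z : H)) (F.sub_starProjection_mem_orthogonal z), add_zero]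
    rfl
  have hBnorm : ‖B‖ = ‖A‖ := by
    refine le_antisymm (B.opNorm_le_bound (norm_nonneg A) fun y => ?_)
      (A.opNorm_le_bound (norm_nonneg B) fun z => ?_)
    · calc ‖A y‖ ≤ ‖A‖ * ‖(y : H)‖ := A.le_opNorm _
        _ = ‖A‖ * ‖y‖ := rfl
    · rw [hAP z]
      calc ‖B (Submodule.orthogonalProjectionOnto F z)‖ ≤ ‖B‖ * ‖Submodule.orthogonalProjectionOnto F z‖ := B.le_opNorm _
        _ ≤ ‖B‖ * ‖z‖ := by
            apply mul_le_mul_of_nonneg_left _ (norm_nonneg B)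
            calc ‖Submodule.orthogonalProjectionOnto F z‖ ≤ ‖Submodule.orthogonalProjectionOnto F‖ * ‖z‖ :=
              (Submodule.orthogonalProjectionOnto F).le_opNorm z
            _ ≤ 1 * ‖z‖ := by
                exact mul_le_mul_of_nonneg_right (Submodule.orthogonalProjectionOnto_norm_le F) (norm_nonneg z)
            _ = ‖z‖ := one_mul _
  obtain ⟨y, hy1, hyB⟩ := findim_attains B
  have hTpos : (0 : ℝ) < ‖T‖ := by
    rw [norm_pos_iff]; exact hT
  set x : E := ((‖T‖ : ℂ))⁻¹ • B y with hx
  have hxnorm : ‖x‖ = 1 := by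
    rw [hx, norm_smul, norm_inv, Complex.norm_real, Real.norm_eq_abs,
      abs_of_pos hTpos, hyB, hBnorm, hAnorm]
    field_simp
  refine ⟨x, hxnorm, le_antisymm (by simpa [hxnorm] using T.le_opNorm x) ?_⟩
  have hinner : ⟪(y : H), T x⟫_ℂ = (‖T‖ : ℂ) := by
    rw [← ContinuousLinearMap.adjoint_inner_left, ← hA]
    have hAy : A (y : H) = B y := rfl
    rw [hAy, hx, inner_smul_right, inner_self_eq_norm_sq_to_K, hyB, hBnorm, hAnorm]
    have : (‖T‖ : ℂ) ≠ 0 := by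
      simpa using hTpos.ne'
    field_simp
    rfl
  have hle : ‖T‖ ≤ ‖(y : H)‖ * ‖T x‖ := by
    calc ‖T‖ = ‖⟪(y : H), T x⟫_ℂ‖ := by rw [hinner]; simp [abs_of_pos hTpos]
      _ ≤ ‖(y : H)‖ * ‖T x‖ := norm_inner_le_norm _ _
  have : ‖(y : H)‖ = 1 := hy1
  rwa [this, one_mul] at hle

lemma exists_orthonormal_seq {H : Type*} [NormedAddCommGroup H] [InnerProductSpace ℂ H]
    [CompleteSpace H] (K : Submodule ℂ H) (hK : IsClosed (K : Set H))
    (hfd : ¬ FiniteDimensional ℂ K) :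
    ∃ f : ℕ → H, Orthonormal ℂ f ∧ ∀ n, f n ∈ K := by
  haveI : CompleteSpace K := hK.completeSpace_coe
  obtain ⟨w, b, hb⟩ := exists_hilbertBasis ℂ K
  have hw : w.Infinite := by
    by_contra hfin
    rw [Set.not_infinite] at hfin
    apply hfd
    have hspan := b.dense_span
    rw [hb, Subtype.range_coe] at hspan
    haveI : FiniteDimensional ℂ (Submodule.span ℂ (w : Set K)) :=
      FiniteDimensional.span_of_finite ℂ hfin
    have hclosed : IsClosed ((Submodule.span ℂ (w : Set K)) : Set K) :=
      Submodule.closed_of_finiteDimensional _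
    rw [hclosed.submodule_topologicalClosure_eq] at hspan
    haveI : FiniteDimensional ℂ (⊤ : Submodule ℂ K) := hspan ▸ inferInstance
    exact (Submodule.topEquiv (R := ℂ) (M := K)).finiteDimensional
  set e := hw.natEmbedding
  have horth : Orthonormal ℂ (fun n => b (e n)) := b.orthonormal.comp e e.injective
  refine ⟨fun n => ((b (e n) : K) : H), ?_, fun n => (b (e n)).2⟩
  rw [orthonormal_iff_ite] at horth ⊢
  intro i j
  have := horth i j
  rwa [Submodule.coe_inner] at this
set_option maxHeartbeats 1000000 in
theorem partial_isometry_AN_iff {H : Type*}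
    [NormedAddCommGroup H] [InnerProductSpace ℂ H] [CompleteSpace H]
    (U : H →L[ℂ] H) (M : Submodule ℂ H) (hM : IsClosed (M : Set H))
    (hiso : ∀ x ∈ M, ‖U x‖ = ‖x‖) (hker : ∀ x ∈ Mᗮ, U x = 0) :
    IsAN U ↔ FiniteDimensional ℂ M ∨ FiniteDimensional ℂ Mᗮ := by
  haveI hMc : CompleteSpace M := hM.completeSpace_coe
  have hUP : ∀ z : H, U z = U ((Submodule.orthogonalProjectionOnto M z : H)) := by
    intro z
    have hdec : U z = U (Submodule.orthogonalProjectionOnto M z : H) + U (z - Submodule.orthogonalProjectionOnto M z) := by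
      rw [← map_add]; congr 1; abel
    rw [hdec, hker (z - (Submodule.orthogonalProjectionOnto M z : H)) (M.sub_starProjection_mem_orthogonal z), add_zero]
  have hnorm : ∀ x : H, ‖U x‖ = ‖(Submodule.orthogonalProjectionOnto M x : H)‖ := by
    intro x
    rw [hUP x, hiso _ (Submodule.orthogonalProjectionOnto M x).2]
  have hUle : ∀ x : H, ‖U x‖ ≤ ‖x‖ := by
    intro x
    rw [hnorm]
    have h1 : ‖(Submodule.orthogonalProjectionOnto M x : H)‖ = ‖Submodule.orthogonalProjectionOnto M x‖ := rfl
    rw [h1]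
    calc ‖Submodule.orthogonalProjectionOnto M x‖ ≤ ‖Submodule.orthogonalProjectionOnto M‖ * ‖x‖ :=
          (Submodule.orthogonalProjectionOnto M).le_opNorm x
      _ ≤ 1 * ‖x‖ := mul_le_mul_of_nonneg_right (Submodule.orthogonalProjectionOnto_norm_le M) (norm_nonneg x)
      _ = ‖x‖ := one_mul _
  constructor
  · intro hAN
    by_contra hcon
    push_neg at hcon
    obtain ⟨h1, h2⟩ := hcon
    obtain ⟨e, he, heM⟩ := exists_orthonormal_seq M hM h1
    obtain ⟨f, hf, hfM⟩ := exists_orthonormal_seq Mᗮ (Submodule.isClosed_orthogonal M) h2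
    set x : ℕ → H := fun n => (seqA n : ℂ) • e n + (seqB n : ℂ) • f n with hxdef
    have hef : ∀ m n, ⟪e m, f n⟫_ℂ = 0 := fun m n =>
      (Submodule.mem_orthogonal M (f n)).mp (hfM n) (e m) (heM m)
    have hfe : ∀ m n, ⟪f m, e n⟫_ℂ = 0 := fun m n =>
      inner_eq_zero_symm.mp (hef n m)
    have hee := orthonormal_iff_ite.mp he
    have hff := orthonormal_iff_ite.mp hf
    have hxx : ∀ m n, ⟪x m, x n⟫_ℂ = if m = n then (1:ℂ) else 0 := by
      intro m n
      simp only [hxdef, inner_add_left, inner_add_right, inner_smul_left, inner_smul_right,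
        hee, hff, hef, hfe, Complex.conj_ofReal, mul_zero, add_zero, zero_add]
      by_cases hmn : m = n
      · subst hmn
        simp only [eq_self_iff_true, if_true]
        have hsum := (seq_facts m).2.2.2
        have hcast : ((seqA m : ℂ)) * ((seqA m : ℂ) * 1) + (seqB m : ℂ) * ((seqB m : ℂ) * 1)
            = ((seqA m ^2 + seqB m ^2 : ℝ) : ℂ) := by push_cast; ring
        rw [hcast, hsum]
        norm_num
      · simp [hmn]
    have horthx : Orthonormal ℂ x := orthonormal_iff_ite.mpr hxx
    set N := (Submodule.span ℂ (Set.range x)).topologicalClosure with hN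
    have hNclosed : IsClosed (N : Set H) := Submodule.isClosed_topologicalClosure _
    have hmemN : ∀ n, x n ∈ N := fun n =>
      Submodule.le_topologicalClosure _ (Submodule.subset_span ⟨n, rfl⟩)
    have hx1 : ∀ n, ‖x n‖ = 1 := horthx.1
    have hNne : N ≠ ⊥ := by
      rw [Submodule.ne_bot_iff]
      refine ⟨x 0, hmemN 0, fun h0 => ?_⟩
      have := hx1 0
      rw [h0, norm_zero] at this
      norm_num at this
    have hUx : ∀ n, ‖U (x n)‖ = seqA n := by
      intro n
      have h3 : U (x n) = (seqA n : ℂ) • U (e n) := by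
        simp only [hxdef, map_add, map_smul, hker _ (hfM n), smul_zero, add_zero]
      rw [h3, norm_smul, hiso _ (heM n), he.1 n, Complex.norm_real, Real.norm_eq_abs,
        abs_of_nonneg (seq_facts n).1, mul_one]
    set T := U.comp N.subtypeL with hT
    have hTle : ‖T‖ ≤ 1 := T.opNorm_le_bound zero_le_one fun y => by
      simpa [hT] using hUle (y : H)
    have hTge : ∀ n, seqA n ≤ ‖T‖ := by
      intro n
      have hle2 : ‖T ⟨x n, hmemN n⟩‖ ≤ ‖T‖ * ‖(⟨x n, hmemN n⟩ : N)‖ := T.le_opNorm _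
      have h2' : ‖T ⟨x n, hmemN n⟩‖ = ‖U (x n)‖ := rfl
      have h3' : ‖(⟨x n, hmemN n⟩ : N)‖ = 1 := hx1 n
      rw [h2', hUx n, h3', mul_one] at hle2
      exact hle2
    have hT1 : ‖T‖ = 1 := by
      refine le_antisymm hTle (le_of_tendsto seqA_tendsto ?_)
      exact Filter.Eventually.of_forall hTge
    obtain ⟨x₀, hx₀N, hx₀1, hx₀norm⟩ := hAN N hNclosed hNne
    rw [← hT, hT1] at hx₀norm
    -- x₀ ∈ M via Pythagoras
    have hPnorm : ‖Submodule.orthogonalProjectionOnto M x₀‖ = 1 := by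
      have : ‖(Submodule.orthogonalProjectionOnto M x₀ : H)‖ = 1 := by rw [← hnorm, hx₀norm]
      rw [← this]; rfl
    have hpy := Submodule.norm_sq_eq_add_norm_sq_projection x₀ M
    rw [hx₀1, hPnorm] at hpy
    have hQ : ‖Submodule.orthogonalProjectionOnto Mᗮ x₀‖ = 0 := by nlinarith [norm_nonneg (Submodule.orthogonalProjectionOnto Mᗮ x₀)]
    have hQ0 : Submodule.orthogonalProjectionOnto Mᗮ x₀ = 0 := norm_eq_zero.mp hQ
    have hx₀M : x₀ ∈ M := by
      have := Submodule.orthogonalProjectionOnto_eq_zero_iff.mp hQ0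
      rwa [Submodule.orthogonal_orthogonal] at this
    -- all coefficients vanish
    have hcoef : ∀ n, ⟪x n, x₀⟫_ℂ = 0 := by
      intro n
      set g : H →L[ℂ] ℂ := innerSL ℂ (f n) - (seqB n : ℂ) • innerSL ℂ (x n) with hg
      have hgen : ∀ m, g (x m) = 0 := by
        intro m
        simp only [hg, ContinuousLinearMap.sub_apply, ContinuousLinearMap.smul_apply,
          innerSL_apply_apply, hxx]
        have hfx : ⟪f n, x m⟫_ℂ = (seqB m : ℂ) * (if n = m then 1 else 0) := by
          simp only [hxdef, inner_add_right, inner_smul_right, hfe, hff, mul_zero, zero_add]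
        rw [hfx]
        by_cases hmn : n = m
        · subst hmn; simp
        · simp [hmn]
      have hspan : N ≤ LinearMap.ker (g : H →ₗ[ℂ] ℂ) := by
        apply Submodule.topologicalClosure_minimal
        · rw [Submodule.span_le]
          rintro _ ⟨m, rfl⟩
          exact LinearMap.mem_ker.mpr (hgen m)
        · exact ContinuousLinearMap.isClosed_ker g
      have hgx₀ : g x₀ = 0 := LinearMap.mem_ker.mp (hspan hx₀N)
      have hfx₀ : ⟪f n, x₀⟫_ℂ = 0 :=
        (Submodule.mem_orthogonal' M (f n)).mp (hfM n) x₀ hx₀M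
      rw [hg] at hgx₀
      simp only [ContinuousLinearMap.sub_apply, ContinuousLinearMap.smul_apply,
        innerSL_apply_apply, hfx₀, smul_eq_mul, zero_sub, neg_eq_zero] at hgx₀
      have hbne : (seqB n : ℂ) ≠ 0 := by
        simpa using (seq_facts n).2.2.1.ne'
      exact (mul_eq_zero.mp hgx₀).resolve_left hbne
    -- x₀ = 0
    have hx₀0 : x₀ = 0 := by
      have hspan : N ≤ LinearMap.ker (innerSL ℂ x₀ : H →ₗ[ℂ] ℂ) := by
        apply Submodule.topologicalClosure_minimal
        · rw [Submodule.span_le]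
          rintro _ ⟨m, rfl⟩
          have hz : ⟪x₀, x m⟫_ℂ = 0 := inner_eq_zero_symm.mp (hcoef m)
          exact LinearMap.mem_ker.mpr (by simpa using hz)
        · exact ContinuousLinearMap.isClosed_ker _
      have h0 : ⟪x₀, x₀⟫_ℂ = 0 := by
        have hm := LinearMap.mem_ker.mp (hspan hx₀N)
        simpa using hm
      exact inner_self_eq_zero.mp h0
    rw [hx₀0, norm_zero] at hx₀1
    norm_num at hx₀1
  · -- easy direction
    rintro h N hNclosed hNne
    haveI : CompleteSpace N := hNclosed.completeSpace_coe
    set T := U.comp N.subtypeL with hT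
    have hTle : ‖T‖ ≤ 1 := T.opNorm_le_bound zero_le_one fun y => by
      simpa [hT] using hUle (y : H)
    by_cases hT0 : T = 0
    · obtain ⟨y, hyN, hy0⟩ := Submodule.ne_bot_iff N |>.mp hNne
      have hyn : ‖y‖ ≠ 0 := norm_ne_zero_iff.mpr hy0
      refine ⟨((‖y‖ : ℂ))⁻¹ • y, Submodule.smul_mem _ _ hyN, ?_, ?_⟩
      · rw [norm_smul, norm_inv, Complex.norm_real, Real.norm_eq_abs,
          abs_of_nonneg (norm_nonneg y)]
        field_simp
      · have h1 : U (((‖y‖ : ℂ))⁻¹ • y) = T (((‖y‖ : ℂ))⁻¹ • (⟨y, hyN⟩ : N)) := rfl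
        rw [h1, hT0]
        simp only [ContinuousLinearMap.zero_apply, norm_zero]
        exact (norm_zero (E := N →L[ℂ] H)).symm
    rcases h with hfin | hfin
    · -- M finite dimensional : finite rank
      haveI : FiniteDimensional ℂ (M.map (U : H →ₗ[ℂ] H)) := Module.Finite.map M _
      have hrange : ∀ y : N, T y ∈ M.map (U : H →ₗ[ℂ] H) := by
        intro y
        have h1 : T y = U ((Submodule.orthogonalProjectionOnto M (y : H) : H)) := hUP (y : H)
        rw [h1]
        exact ⟨_, (Submodule.orthogonalProjectionOnto M (y : H)).2, rfl⟩
      obtain ⟨x, hx1, hxT⟩ := attains_of_finite_range T _ hrange hT0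
      exact ⟨(x : H), x.2, hx1, hxT⟩
    · -- Mᗮ finite dimensional
      by_cases hNfin : FiniteDimensional ℂ N
      · haveI : Nontrivial N := Submodule.nontrivial_iff_ne_bot.mpr hNne
        obtain ⟨x, hx1, hxT⟩ := findim_attains T
        exact ⟨(x : H), x.2, hx1, hxT⟩
      · -- N infinite dimensional: N ∩ M nontrivial
        have hex : ∃ y : H, y ∈ N ∧ y ∈ M ∧ y ≠ 0 := by
          by_contra hno
          push_neg at hno
          apply hNfin
          set QL : N →ₗ[ℂ] Mᗮ :=
            (Submodule.orthogonalProjectionOnto Mᗮ).toLinearMap.comp (N.subtype) with hQL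
          have hinj : Function.Injective QL := by
            rw [← LinearMap.ker_eq_bot, LinearMap.ker_eq_bot']
            intro y hy
            have hQy : Submodule.orthogonalProjectionOnto Mᗮ (y : H) = 0 := hy
            have hyM : (y : H) ∈ M := by
              have := Submodule.orthogonalProjectionOnto_eq_zero_iff.mp hQy
              rwa [Submodule.orthogonal_orthogonal] at this
            have := hno (y : H) y.2 hyM
            ext
            simpa using this
          exact FiniteDimensional.of_injective QL hinj
        obtain ⟨y, hyN, hyM, hy0⟩ := hex
        have hyn : ‖y‖ ≠ 0 := norm_ne_zero_iff.mpr hy0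
        set x : H := ((‖y‖ : ℂ))⁻¹ • y with hx
        have hxN : x ∈ N := Submodule.smul_mem _ _ hyN
        have hxM : x ∈ M := Submodule.smul_mem _ _ hyM
        have hx1 : ‖x‖ = 1 := by
          rw [hx, norm_smul, norm_inv, Complex.norm_real, Real.norm_eq_abs,
            abs_of_nonneg (norm_nonneg y)]
          field_simp
        have hUx : ‖U x‖ = 1 := by rw [hiso x hxM, hx1]
        have hTge : 1 ≤ ‖T‖ := by
          have h1 : ‖T ⟨x, hxN⟩‖ ≤ ‖T‖ * ‖(⟨x, hxN⟩ : N)‖ := T.le_opNorm _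
          have h2 : ‖T ⟨x, hxN⟩‖ = ‖U x‖ := rfl
          have h3 : ‖(⟨x, hxN⟩ : N)‖ = 1 := hx1
          rw [h2, hUx, h3, mul_one] at h1
          exact h1
        exact ⟨x, hxN, hx1, by rw [hUx, le_antisymm hTle hTge]⟩
end

section
/- If K is a positive compact operator on a Hilbert space H, then K + I is an AN operator: for every nonzero closed subspace M there exists a unit vector x ∈ M with ‖(K+I)x‖ = ‖(K+I)|_M‖. -/
open ContinuousLinearMap Filter Topology Metric
open scoped InnerProductSpace

/-- A positive compact operator attains the supremum of its quadratic form on the unit sphere. -/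
lemma exists_max_reApplyInnerSelf {E : Type*} [NormedAddCommGroup E] [InnerProductSpace ℂ E]
    [CompleteSpace E] (B : E →L[ℂ] E) (hB : B.IsPositive) (hBc : IsCompactOperator ⇑B)
    (x₀ : E) (hx₀ : ‖x₀‖ = 1) :
    ∃ x : E, ‖x‖ = 1 ∧ ∀ y : E,
      B.reApplyInnerSelf y ≤ B.reApplyInnerSelf x * ‖y‖ ^ 2 := by
  set q : E → ℝ := B.reApplyInnerSelf with hq
  set S : Set ℝ := q '' sphere 0 1 with hS
  have hx₀S : q x₀ ∈ S := ⟨x₀, by simpa [mem_sphere_zero_iff_norm] using hx₀, rfl⟩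
  have hSne : S.Nonempty := ⟨_, hx₀S⟩
  have hbdd : BddAbove S := by
    refine ⟨‖B‖, ?_⟩
    rintro r ⟨y, hy, rfl⟩
    rw [mem_sphere_zero_iff_norm] at hy
    calc q y ≤ ‖B y‖ * ‖y‖ := re_inner_le_norm _ _
      _ ≤ ‖B‖ * ‖y‖ * ‖y‖ := by gcongr; exact B.le_opNorm y
      _ = ‖B‖ := by rw [hy]; ring
  set s : ℝ := sSup S with hsdef
  have hs0 : 0 ≤ s := le_trans (hB.2 x₀) (le_csSup hbdd hx₀S)
  have hqle : ∀ u : E, q u ≤ s * ‖u‖ ^ 2 := by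
    intro u
    rcases eq_or_ne u 0 with rfl | hu
    · simp [hq, reApplyInnerSelf]
    · have hnu : (0:ℝ) < ‖u‖ := norm_pos_iff.mpr hu
      have hv : ‖((‖u‖⁻¹ : ℂ)) • u‖ = 1 := by
        simp [norm_smul, abs_of_pos hnu, inv_mul_cancel₀ hnu.ne']
      have hvS : q (((‖u‖⁻¹ : ℂ)) • u) ≤ s :=
        le_csSup hbdd ⟨_, by simpa [mem_sphere_zero_iff_norm] using hv, rfl⟩
      rw [hq, B.reApplyInnerSelf_smul] at hvS
      have : ‖(‖u‖⁻¹ : ℂ)‖ ^ 2 = (‖u‖ ^ 2)⁻¹ := by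
        simp [abs_of_pos hnu]
      rw [this] at hvS
      have h2 : (0:ℝ) < ‖u‖ ^ 2 := by positivity
      calc q u = ‖u‖ ^ 2 * ((‖u‖ ^ 2)⁻¹ * q u) := by field_simp
        _ ≤ ‖u‖ ^ 2 * s := by gcongr
        _ = s * ‖u‖ ^ 2 := mul_comm _ _
  have hsym : ∀ a b : E, RCLike.re ⟪B a, b⟫_ℂ = RCLike.re ⟪B b, a⟫_ℂ := by
    intro a b
    rw [← hB.isSelfAdjoint.adjoint_eq, ContinuousLinearMap.adjoint_inner_left, ← inner_conj_symm]
    rw [hB.isSelfAdjoint.adjoint_eq]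
    exact (Complex.conj_re _)
  have hkey : ∀ u y : E, 4 * RCLike.re ⟪B u, y⟫_ℂ = q (u + y) - q (u - y) := by
    intro u y
    simp only [hq, reApplyInnerSelf_apply, map_add, map_sub, inner_add_left, inner_add_right,
      inner_sub_left, inner_sub_right, map_add, map_sub]
    linarith [hsym y u]
  have hBle : ∀ u : E, ‖B u‖ ≤ s * ‖u‖ := by
    intro u
    rcases eq_or_ne (B u) 0 with h0 | h0
    · rw [h0, norm_zero]; positivity
    · have hu : u ≠ 0 := by rintro rfl; simp at h0
      have hnu : (0:ℝ) < ‖u‖ := norm_pos_iff.mpr hu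
      have hnBu : (0:ℝ) < ‖B u‖ := norm_pos_iff.mpr h0
      set y : E := ((‖u‖ / ‖B u‖ : ℝ) : ℂ) • B u with hy
      have hny : ‖y‖ = ‖u‖ := by
        rw [hy, norm_smul]
        simp [abs_of_pos (div_pos hnu hnBu)]
        field_simp
      have hre : RCLike.re ⟪B u, y⟫_ℂ = ‖u‖ * ‖B u‖ := by
        have hself : ⟪B u, B u⟫_ℂ = ((‖B u‖ ^ 2 : ℝ) : ℂ) := by
          rw [inner_self_eq_norm_sq_to_K]; norm_cast
        rw [hy, inner_smul_right, hself, ← Complex.ofReal_mul, RCLike.re_to_complex,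
          Complex.ofReal_re]
        field_simp
      have h1 : 4 * RCLike.re ⟪B u, y⟫_ℂ ≤ q (u + y) := by
        rw [hkey u y]
        have := hB.2 (u - y)
        linarith
      have h2 : q (u + y) ≤ s * (2 * ‖u‖) ^ 2 := by
        calc q (u + y) ≤ s * ‖u + y‖ ^ 2 := hqle _
          _ ≤ s * (2 * ‖u‖) ^ 2 := by
              gcongr
              calc ‖u + y‖ ≤ ‖u‖ + ‖y‖ := norm_add_le _ _
                _ = 2 * ‖u‖ := by rw [hny]; ring
      rw [hre] at h1
      nlinarith
  -- main argument
  by_cases hs : s = 0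
  · refine ⟨x₀, hx₀, fun y => ?_⟩
    have h1 : q y ≤ s * ‖y‖ ^ 2 := hqle y
    have h2 : 0 ≤ q x₀ := hB.2 x₀
    rw [hs] at h1
    simp at h1
    nlinarith [sq_nonneg ‖y‖]
  · have hs' : 0 < s := lt_of_le_of_ne hs0 (Ne.symm hs)
    -- approximating sequence
    have hseq : ∀ n : ℕ, ∃ x : E, ‖x‖ = 1 ∧ s - 1 / (n + 1) < q x := by
      intro n
      have hlt : s - 1 / (n + 1) < s := by
        have : (0:ℝ) < 1 / (n + 1) := by positivity
        linarith
      obtain ⟨r, hrS, hr⟩ := exists_lt_of_lt_csSup hSne hlt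
      obtain ⟨x, hx, rfl⟩ := hrS
      exact ⟨x, mem_sphere_zero_iff_norm.mp hx, hr⟩
    choose u hu1 hu2 using hseq
    have hqu : Tendsto (fun n => q (u n)) atTop (𝓝 s) := by
      have hlow : Tendsto (fun n : ℕ => s - 1 / (n + 1)) atTop (𝓝 s) := by
        simpa using (tendsto_const_nhds (x := s)).sub tendsto_one_div_add_atTop_nhds_zero_nat
      refine tendsto_of_tendsto_of_tendsto_of_le_of_le hlow tendsto_const_nhds
        (fun n => (hu2 n).le) (fun n => ?_)
      calc q (u n) ≤ s * ‖u n‖ ^ 2 := hqle _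
        _ = s := by rw [hu1]; ring
    -- compactness
    have hcpt : IsCompact (closure (⇑B '' closedBall 0 1)) := by
      have := hBc.isCompact_closure_image_closedBall (𝕜₁ := ℂ) (f := (B : E →ₗ[ℂ] E)) 1
      exact this
    have hmem : ∀ n : ℕ, B (u n) ∈ closure (⇑B '' closedBall 0 1) := fun n =>
      subset_closure ⟨u n, by simp [hu1 n], rfl⟩
    obtain ⟨z, _, φ, hφ, hconv⟩ := hcpt.tendsto_subseq hmem
    -- ‖B uₖ - s uₖ‖ → 0
    have hsq : ∀ n : ℕ, ‖B (u n) - (s : ℂ) • u n‖ ^ 2 ≤ 2 * s ^ 2 - 2 * s * q (u n) := by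
      intro n
      have hns : ‖B (u n) - (s : ℂ) • u n‖ ^ 2
          = ‖B (u n)‖ ^ 2 - 2 * RCLike.re ⟪B (u n), (s : ℂ) • u n⟫_ℂ + ‖(s : ℂ) • u n‖ ^ 2 :=
        norm_sub_sq (𝕜 := ℂ) _ _
      have h1 : RCLike.re ⟪B (u n), (s : ℂ) • u n⟫_ℂ = s * q (u n) := by
        rw [inner_smul_right]
        simp [hq, reApplyInnerSelf_apply]
      have h2 : ‖(s : ℂ) • u n‖ ^ 2 = s ^ 2 := by
        rw [norm_smul, hu1]
        simp [abs_of_pos hs']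
      have h3 : ‖B (u n)‖ ^ 2 ≤ s ^ 2 := by
        have := hBle (u n)
        rw [hu1, mul_one] at this
        nlinarith [norm_nonneg (B (u n))]
      rw [hns, h1, h2]
      linarith
    have hdiff : Tendsto (fun k => B (u (φ k)) - (s : ℂ) • u (φ k)) atTop (𝓝 0) := by
      rw [tendsto_zero_iff_norm_tendsto_zero]
      have hsq0 : Tendsto (fun k => ‖B (u (φ k)) - (s : ℂ) • u (φ k)‖ ^ 2) atTop (𝓝 0) := by
        have hrhs : Tendsto (fun k => 2 * s ^ 2 - 2 * s * q (u (φ k))) atTop (𝓝 0) := by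
          have h1 : Tendsto (fun k => q (u (φ k))) atTop (𝓝 s) := hqu.comp hφ.tendsto_atTop
          have h2 := (tendsto_const_nhds (x := 2 * s ^ 2) (f := atTop (α := ℕ))).sub
            (h1.const_mul (2 * s))
          have h3 : (2 * s ^ 2 - 2 * s * s : ℝ) = 0 := by ring
          rw [h3] at h2
          exact h2
        exact tendsto_of_tendsto_of_tendsto_of_le_of_le tendsto_const_nhds hrhs
          (fun k => by positivity) (fun k => hsq (φ k))
      have h : Tendsto (fun k => Real.sqrt (‖B (u (φ k)) - (s : ℂ) • u (φ k)‖ ^ 2)) atTop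
          (𝓝 (Real.sqrt 0)) := (Real.continuous_sqrt.tendsto 0).comp hsq0
      rw [Real.sqrt_zero] at h
      have heq : (fun k => ‖B (u (φ k)) - (s : ℂ) • u (φ k)‖)
          = fun k => Real.sqrt (‖B (u (φ k)) - (s : ℂ) • u (φ k)‖ ^ 2) := by
        funext k; rw [Real.sqrt_sq (norm_nonneg _)]
      rw [heq]; exact h
    have hsu : Tendsto (fun k => (s : ℂ) • u (φ k)) atTop (𝓝 z) := by
      have := hconv.sub hdiff
      simpa using this
    have hu' : Tendsto (fun k => u (φ k)) atTop (𝓝 ((s : ℂ)⁻¹ • z)) := by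
      have hsne : (s : ℂ) ≠ 0 := by exact_mod_cast hs
      have h2 := hsu.const_smul ((s : ℂ)⁻¹)
      convert h2 using 1
      funext k
      exact (inv_smul_smul₀ hsne _).symm
    set x : E := (s : ℂ)⁻¹ • z with hx
    have hx1 : ‖x‖ = 1 := by
      have h1 : Tendsto (fun k => ‖u (φ k)‖) atTop (𝓝 ‖x‖) :=
        (continuous_norm.tendsto x).comp hu'
      have h2 : Tendsto (fun k : ℕ => ‖u (φ k)‖) atTop (𝓝 1) := by
        simpa [hu1] using tendsto_const_nhds (x := (1:ℝ)) (f := atTop (α := ℕ))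
      exact tendsto_nhds_unique h1 h2
    have hqx : q x = s :=
      tendsto_nhds_unique ((B.reApplyInnerSelf_continuous.tendsto x).comp hu')
        (hqu.comp hφ.tendsto_atTop)
    refine ⟨x, hx1, fun y => ?_⟩
    rw [hqx]
    exact hqle y


theorem compact_positive_add_id_AN {H : Type*}
    [NormedAddCommGroup H] [InnerProductSpace ℂ H] [CompleteSpace H]
    (K : H →L[ℂ] H) (hK : IsCompactOperator ⇑K) (hKpos : K.IsPositive) :
    IsAN (K + ContinuousLinearMap.id ℂ H) := by
  intro M hMclosed hMne
  haveI : CompleteSpace M := hMclosed.completeSpace_coe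
  -- a unit vector in M
  obtain ⟨v, hvM, hv0⟩ := Submodule.ne_bot_iff M |>.mp hMne
  have hnv : (0:ℝ) < ‖v‖ := norm_pos_iff.mpr hv0
  set x₀ : M := ⟨((‖v‖⁻¹ : ℂ)) • v, M.smul_mem _ hvM⟩ with hx₀def
  have hx₀1 : ‖x₀‖ = 1 := by
    show ‖((‖v‖⁻¹ : ℂ)) • v‖ = 1
    simp [norm_smul, abs_of_pos hnv, inv_mul_cancel₀ hnv.ne']
  -- the operator A = K² + 2K
  set A : H →L[ℂ] H := K ∘L K + K + K with hAdef
  have hKsa : ∀ a b : H, ⟪K a, b⟫_ℂ = ⟪a, K b⟫_ℂ := by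
    intro a b
    conv_lhs => rw [← hKpos.isSelfAdjoint.adjoint_eq]
    exact ContinuousLinearMap.adjoint_inner_left K b a
  have hKK : (K ∘L K).IsPositive := by
    have h := (ContinuousLinearMap.isPositive_one (E := H) (𝕜 := ℂ)).conj_adjoint K
    rw [hKpos.isSelfAdjoint.adjoint_eq] at h
    simpa [ContinuousLinearMap.one_def] using h
  have hA_pos : A.IsPositive := (hKK.add hKpos).add hKpos
  have hA_cpt : IsCompactOperator ⇑A := by
    have h1 : IsCompactOperator (⇑K ∘ ⇑K) := hK.comp_clm K
    exact (h1.add hK).add hK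
  -- compression of A to M
  set B : M →L[ℂ] M := M.orthogonalProjectionOnto ∘L A ∘L M.subtypeL with hBdef
  have hB_pos : B.IsPositive := hA_pos.orthogonalProjection_comp M
  have hB_cpt : IsCompactOperator ⇑B := by
    have h1 : IsCompactOperator (⇑A ∘ ⇑M.subtypeL) := hA_cpt.comp_clm M.subtypeL
    exact h1.continuous_comp (M.orthogonalProjectionOnto).continuous
  -- quadratic form identity
  have hBA : ∀ w : M, B.reApplyInnerSelf w = RCLike.re ⟪A (w:H), (w:H)⟫_ℂ := by
    intro w
    rw [ContinuousLinearMap.reApplyInnerSelf_apply]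
    congr 1
    show ⟪((M.orthogonalProjectionOnto (A (w:H)) : M) : H), (w:H)⟫_ℂ = _
    rw [← Submodule.starProjection_apply, Submodule.inner_starProjection_left_eq_right,
      Submodule.starProjection_apply, Submodule.orthogonalProjectionOnto_mem_subspace_eq_self]
  have hTsq : ∀ w : M, ‖(K + ContinuousLinearMap.id ℂ H) (w:H)‖ ^ 2
      = B.reApplyInnerSelf w + ‖(w:H)‖ ^ 2 := by
    intro w
    rw [hBA w]
    have hx : (K + ContinuousLinearMap.id ℂ H) (w:H) = K (w:H) + (w:H) := by
      simp
    rw [hx, norm_add_sq (𝕜 := ℂ)]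
    have hAw : ⟪A (w:H), (w:H)⟫_ℂ
        = ⟪K (w:H), K (w:H)⟫_ℂ + ⟪K (w:H), (w:H)⟫_ℂ + ⟪K (w:H), (w:H)⟫_ℂ := by
      rw [hAdef]
      simp only [ContinuousLinearMap.add_apply, ContinuousLinearMap.comp_apply]
      rw [inner_add_left, inner_add_left, hKsa (K (w:H)) (w:H)]
    rw [hAw]
    simp only [map_add, inner_self_eq_norm_sq]
    ring
  obtain ⟨x, hx1, hxmax⟩ := exists_max_reApplyInnerSelf B hB_pos hB_cpt x₀ hx₀1
  have hx1' : ‖(x:H)‖ = 1 := hx1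
  refine ⟨(x : H), x.2, hx1', ?_⟩
  set c : ℝ := ‖(K + ContinuousLinearMap.id ℂ H) (x:H)‖ with hc
  set T := (K + ContinuousLinearMap.id ℂ H).comp M.subtypeL with hT
  have hcsq : c ^ 2 = B.reApplyInnerSelf x + 1 := by
    rw [hc, hTsq x, hx1']
    ring
  have hb : ∀ w : M, ‖T w‖ ≤ c * ‖w‖ := by
    intro w
    have h1 : ‖T w‖ ^ 2 = B.reApplyInnerSelf w + ‖(w:H)‖ ^ 2 := hTsq w
    have h2 : B.reApplyInnerSelf w ≤ B.reApplyInnerSelf x * ‖w‖ ^ 2 := hxmax w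
    have hnw : ‖(w:H)‖ = ‖w‖ := rfl
    have h3 : ‖T w‖ ^ 2 ≤ (c * ‖w‖) ^ 2 := by
      rw [h1, hnw]
      have : (c * ‖w‖) ^ 2 = (B.reApplyInnerSelf x + 1) * ‖w‖ ^ 2 := by
        rw [mul_pow, hcsq]
      rw [this]
      nlinarith [sq_nonneg ‖w‖]
    calc ‖T w‖ = Real.sqrt (‖T w‖ ^ 2) := (Real.sqrt_sq (norm_nonneg _)).symm
      _ ≤ Real.sqrt ((c * ‖w‖) ^ 2) := Real.sqrt_le_sqrt h3
      _ = c * ‖w‖ := Real.sqrt_sq (by positivity)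
  have hTle : ‖T‖ ≤ c := T.opNorm_le_bound (norm_nonneg _) hb
  have hcle : c ≤ ‖T‖ := by
    have h := T.le_opNorm x
    have hTx : T x = (K + ContinuousLinearMap.id ℂ H) (x:H) := rfl
    rw [hTx, hx1, mul_one] at h
    exact h
  exact le_antisymm hcle hTle
end
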